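/- arXiv:2003.00694 — 5 statements merged into one kernel-verified Lean document; each statement's English description precedes it below -/
import Mathlib

section
/- Let N ≥ 2, let λ_1,…,λ_{N²−1} be N×N complex matrices that are Hermitian, traceless and satisfy Tr[λ_μ λ_ν] = 2δ_{μν}, and let x ∈ ℝ^{N²−1} be a unit vector. For real numbers r, s define ρ = (1/N)·I + (r/2)·Σ_μ x_μ λ_μ and ρ' = (1/N)·I + (s/2)·Σ_μ x_μ λ_μ. If both ρ and ρ' are positive semidefinite, then r·s ≥ −2/N. -/
open Matrix BigOperators
open scoped ComplexOrder

lemma psd_trace_nonneg {n : Type*} [Fintype n] [DecidableEq n]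
    {M : Matrix n n ℂ} (hM : M.PosSemidef) : 0 ≤ M.trace := by
  rw [Matrix.trace]
  apply Finset.sum_nonneg
  intro i _
  exact hM.diag_nonneg

open scoped MatrixOrder in
lemma psd_trace_mul_nonneg {n : Type*} [Fintype n] [DecidableEq n]
    {A B : Matrix n n ℂ} (hA : A.PosSemidef) (hB : B.PosSemidef) :
    0 ≤ (A * B).trace := by
  have hs : CFC.sqrt B * CFC.sqrt B = B := CFC.sqrt_mul_sqrt_self B hB.nonneg
  have h1 : (A * B).trace = (CFC.sqrt B * A * CFC.sqrt B).trace := by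
    calc (A * B).trace = (A * CFC.sqrt B * CFC.sqrt B).trace := by rw [Matrix.mul_assoc, hs]
      _ = (CFC.sqrt B * (A * CFC.sqrt B)).trace := Matrix.trace_mul_comm _ _
      _ = (CFC.sqrt B * A * CFC.sqrt B).trace := by rw [Matrix.mul_assoc]
  rw [h1]
  have hH : (CFC.sqrt B).conjTranspose = CFC.sqrt B := (CFC.sqrt_nonneg B).posSemidef.1
  have := hA.mul_mul_conjTranspose_same (CFC.sqrt B)
  rw [hH] at this
  exact psd_trace_nonneg this

/-- For a generator family `lam` and a unit vector `x` in `ℝ^{N²-1}`,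
if `ρ = (1/N)·I + (r/2)·x·λ` and `ρ' = (1/N)·I + (s/2)·x·λ` are both positive
semidefinite, then `r·s ≥ -2/N`. -/
theorem werner_lemma1_part1 (N : ℕ) (hN : 2 ≤ N)
    (lam : Fin (N ^ 2 - 1) → Matrix (Fin N) (Fin N) ℂ)
    (hherm : ∀ μ, (lam μ).IsHermitian)
    (htraceless : ∀ μ, (lam μ).trace = 0)
    (horth : ∀ μ ν, (lam μ * lam ν).trace = if μ = ν then 2 else 0)
    (x : Fin (N ^ 2 - 1) → ℝ) (hx : ∑ μ, x μ ^ 2 = 1)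
    (r s : ℝ)
    (hρ : (((1 : ℂ) / N) • (1 : Matrix (Fin N) (Fin N) ℂ) +
        ((r : ℂ) / 2) • ∑ μ, (x μ : ℂ) • lam μ).PosSemidef)
    (hρ' : (((1 : ℂ) / N) • (1 : Matrix (Fin N) (Fin N) ℂ) +
        ((s : ℂ) / 2) • ∑ μ, (x μ : ℂ) • lam μ).PosSemidef) :
    r * s ≥ -2 / N := by
  set A : Matrix (Fin N) (Fin N) ℂ := ∑ μ, (x μ : ℂ) • lam μ with hA
  have hNpos : (0 : ℝ) < N := by positivity
  have hNne : (N : ℂ) ≠ 0 := by exact_mod_cast (by positivity : (N:ℝ) ≠ 0)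
  have htrA : A.trace = 0 := by
    rw [hA, Matrix.trace_sum]
    simp [Matrix.trace_smul, htraceless]
  have htrAA : (A * A).trace = 2 := by
    rw [hA, Finset.sum_mul_sum, Matrix.trace_sum]
    have h1 : ∀ μ ∈ Finset.univ, (∑ ν, ((x μ : ℂ) • lam μ) * ((x ν : ℂ) • lam ν)).trace
        = (x μ : ℂ) ^ 2 * 2 := by
      intro μ _
      rw [Matrix.trace_sum]
      have h2 : ∀ ν ∈ Finset.univ, (((x μ : ℂ) • lam μ) * ((x ν : ℂ) • lam ν)).trace
          = if μ = ν then (x μ : ℂ) * (x ν : ℂ) * 2 else 0 := by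
        intro ν _
        rw [Matrix.smul_mul, Matrix.mul_smul, Matrix.trace_smul, Matrix.trace_smul, horth]
        by_cases h : μ = ν <;> simp [h] <;> ring
      rw [Finset.sum_congr rfl h2, Finset.sum_ite_eq]
      simp [pow_two]
    rw [Finset.sum_congr rfl h1]
    have h3 : (∑ μ, (x μ : ℂ) ^ 2 * 2) = (↑(∑ μ, x μ ^ 2) : ℂ) * 2 := by
      push_cast
      rw [Finset.sum_mul]
    rw [h3, hx]
    norm_num
  have key : 0 ≤ ((((1 : ℂ) / N) • (1 : Matrix (Fin N) (Fin N) ℂ) + ((r : ℂ) / 2) • A) *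
      (((1 : ℂ) / N) • (1 : Matrix (Fin N) (Fin N) ℂ) + ((s : ℂ) / 2) • A)).trace :=
    psd_trace_mul_nonneg hρ hρ'
  have hexp : ((((1 : ℂ) / N) • (1 : Matrix (Fin N) (Fin N) ℂ) + ((r : ℂ) / 2) • A) *
      (((1 : ℂ) / N) • (1 : Matrix (Fin N) (Fin N) ℂ) + ((s : ℂ) / 2) • A)).trace
      = (((1 / N + r * s / 2 : ℝ) : ℂ)) := by
    rw [Matrix.add_mul, Matrix.mul_add, Matrix.mul_add]
    simp only [Matrix.smul_mul, Matrix.mul_smul, Matrix.one_mul, Matrix.mul_one,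
      Matrix.trace_add, Matrix.trace_smul, Matrix.trace_one, htrA, htrAA]
    simp only [smul_eq_mul, mul_zero, Finset.card_univ, Fintype.card_fin]
    push_cast
    field_simp
    all_goals first | ring1 | exact Or.inl (by ring)
  rw [hexp] at key
  have hre : (0 : ℝ) ≤ 1 / N + r * s / 2 := by exact_mod_cast key
  rw [ge_iff_le, div_le_iff₀ hNpos]
  have h2 : 0 ≤ (1 / (N:ℝ) + r * s / 2) * (2 * N) := mul_nonneg hre (by positivity)
  have h3 : (1 / (N:ℝ) + r * s / 2) * (2 * N) = 2 + r * s * N := by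
    field_simp
    all_goals first | ring1 | exact Or.inl (by ring)
  linarith [h2, h3.symm ▸ h2]
end

section
/- Let N ≥ 2, let λ_1,…,λ_{N²−1} be N×N complex matrices that are Hermitian, traceless and satisfy Tr[λ_μ λ_ν] = 2δ_{μν}, and let a_1,…,a_{N²} be unit vectors in ℝ^{N²−1} with a_i · a_j = −1/(N²−1) for all i ≠ j. For real numbers r, s and each i define R_i(r) = (1/N)·I + (r/2)·Σ_μ (a_i)_μ λ_μ and S_i(s) = (1/N)·I + (s/2)·Σ_μ (a_i)_μ λ_μ. Then Σ_{i=1}^{N²} (1/N²)·R_i(r) ⊗ S_i(s) = (1/N²)·I⊗I + (r·s/(4(N²−1)))·Σ_{μ=1}^{N²−1} λ_μ ⊗ λ_μ, where ⊗ denotes the Kronecker product of matrices. -/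
open Matrix BigOperators
open scoped Kronecker

section aux

lemma simplex_frame {ι : Type*} [Fintype ι] {m : ℕ} (hcard : Fintype.card ι = m + 1)
    (hm : 0 < m) (a : ι → Fin m → ℝ)
    (hunit : ∀ i, ∑ μ, a i μ ^ 2 = 1)
    (hangle : ∀ i j, i ≠ j → ∑ μ, a i μ * a j μ = -1 / m) :
    (∀ μ ν, ∑ i, a i μ * a i ν = if μ = ν then ((m:ℝ) + 1) / m else 0) ∧
      (∀ μ, ∑ i, a i μ = 0) := by
  have hm' : (0:ℝ) < m := by exact_mod_cast hm
  obtain ⟨e⟩ : Nonempty (ι ≃ Fin (m+1)) := ⟨Fintype.equivFinOfCardEq hcard⟩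
  set t : ℝ := (Real.sqrt m)⁻¹ with ht
  have htpos : 0 < t := by positivity
  have htt : t * t = 1 / m := by
    rw [ht, ← mul_inv, Real.mul_self_sqrt hm'.le, one_div]
  set B : Matrix (Fin (m+1)) (Fin (m+1)) ℝ :=
    fun i j => if h : (j : ℕ) < m then a (e.symm i) ⟨j, h⟩ else t with hB
  have hBrow : ∀ i k, ∑ j, B i j * B k j =
      (∑ μ, a (e.symm i) μ * a (e.symm k) μ) + t * t := by
    intro i k
    rw [Fin.sum_univ_castSucc]
    congr 1
    · apply Finset.sum_congr rfl
      intro j _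
      have hj : ((Fin.castSucc j : Fin (m+1)) : ℕ) < m := j.isLt
      simp [hB, hj]
    · simp [hB]
  have hc : ((m:ℝ) + 1) / m ≠ 0 := by positivity
  have hBB : B * Bᵀ = (((m:ℝ) + 1) / m) • 1 := by
    ext i k
    rw [Matrix.mul_apply]
    simp only [Matrix.transpose_apply]
    rw [hBrow i k]
    by_cases hik : i = k
    · subst hik
      have := hunit (e.symm i)
      simp only [pow_two] at this
      rw [this, htt, Matrix.smul_apply, Matrix.one_apply_eq, smul_eq_mul]
      field_simp
    · have hne : e.symm i ≠ e.symm k := fun h => hik (e.symm.injective h)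
      rw [hangle _ _ hne, htt, Matrix.smul_apply, Matrix.one_apply_ne hik, smul_eq_mul]
      field_simp
      ring
  have hBtB : Bᵀ * B = (((m:ℝ) + 1) / m) • 1 := by
    have h1 : B * ((((m:ℝ) + 1) / m)⁻¹ • Bᵀ) = 1 := by
      rw [Matrix.mul_smul, hBB, smul_smul, inv_mul_cancel₀ hc, one_smul]
    have h2 := mul_eq_one_comm.mp h1
    rw [Matrix.smul_mul] at h2
    calc Bᵀ * B = (((m:ℝ) + 1) / m) • ((((m:ℝ) + 1) / m)⁻¹ • (Bᵀ * B)) := by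
          rw [smul_smul, mul_inv_cancel₀ hc, one_smul]
      _ = (((m:ℝ) + 1) / m) • 1 := by rw [h2]
  have hcol : ∀ p q : Fin (m+1), ∑ i : Fin (m+1), B i p * B i q =
      if p = q then ((m:ℝ) + 1) / m else 0 := by
    intro p q
    have := congrFun (congrFun hBtB p) q
    rw [Matrix.mul_apply] at this
    simp only [Matrix.transpose_apply] at this
    rw [this, Matrix.smul_apply]
    by_cases h : p = q
    · subst h; simp
    · simp [h, Matrix.one_apply_ne h]
  have hBval : ∀ (i : Fin (m+1)) (μ : Fin m), B i (Fin.castSucc μ) = a (e.symm i) μ := by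
    intro i μ
    have hj : ((Fin.castSucc μ : Fin (m+1)) : ℕ) < m := μ.isLt
    simp [hB, hj]
  have hBlast : ∀ i : Fin (m+1), B i (Fin.last m) = t := by
    intro i; simp [hB]
  constructor
  · intro μ ν
    have h := hcol (Fin.castSucc μ) (Fin.castSucc ν)
    simp only [hBval] at h
    have heq : ∑ i : ι, a i μ * a i ν = ∑ i : Fin (m+1), a (e.symm i) μ * a (e.symm i) ν :=
      Fintype.sum_equiv e _ _ (by intro i; simp)
    rw [heq, h]
    simp [Fin.castSucc_inj]
  · intro μ
    have h := hcol (Fin.castSucc μ) (Fin.last m)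
    have hne : Fin.castSucc μ ≠ Fin.last m := Fin.castSucc_lt_last μ |>.ne
    simp only [hBval, hBlast, if_neg hne] at h
    rw [← Finset.sum_mul] at h
    have := mul_eq_zero.mp h
    rcases this with h' | h'
    · have heq : ∑ i : ι, a i μ = ∑ i : Fin (m+1), a (e.symm i) μ :=
        Fintype.sum_equiv e _ _ (by intro i; simp)
      rw [heq, h']
    · exact absurd h' htpos.ne'

lemma sum_kronecker {ι R n : Type*} [Fintype n] [CommRing R] (s : Finset ι)
    (A : ι → Matrix n n R) (B : Matrix n n R) :
    (∑ i ∈ s, A i) ⊗ₖ B = ∑ i ∈ s, A i ⊗ₖ B := by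
  ext ⟨i1, i2⟩ ⟨j1, j2⟩
  simp [Matrix.sum_apply, Finset.sum_mul]

lemma kronecker_sum {ι R n : Type*} [Fintype n] [CommRing R] (s : Finset ι)
    (A : Matrix n n R) (B : ι → Matrix n n R) :
    A ⊗ₖ (∑ i ∈ s, B i) = ∑ i ∈ s, A ⊗ₖ B i := by
  ext ⟨i1, i2⟩ ⟨j1, j2⟩
  simp [Matrix.sum_apply, Finset.mul_sum]

end aux

/-- Decomposition of the Werner state in Bloch representation
by an arbitrary regular simplex `a_1, …, a_{N²}` in `ℝ^{N²-1}`: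
`Σ_i (1/N²) R_i(r) ⊗ S_i(s) = (1/N²) I⊗I + (rs/(4(N²-1))) Σ_μ λ_μ ⊗ λ_μ`. -/
theorem werner_simplex_decomposition (N : ℕ) (hN : 2 ≤ N)
    (lam : Fin (N ^ 2 - 1) → Matrix (Fin N) (Fin N) ℂ)
    (hherm : ∀ μ, (lam μ).IsHermitian)
    (htraceless : ∀ μ, (lam μ).trace = 0)
    (horth : ∀ μ ν, (lam μ * lam ν).trace = if μ = ν then 2 else 0)
    (a : Fin (N ^ 2) → Fin (N ^ 2 - 1) → ℝ)
    (hunit : ∀ i, ∑ μ, a i μ ^ 2 = 1)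
    (hangle : ∀ i j, i ≠ j → ∑ μ, a i μ * a j μ = -1 / ((N : ℝ) ^ 2 - 1))
    (r s : ℝ) :
    ∑ i, ((1 : ℂ) / N ^ 2) •
        ((((1 : ℂ) / N) • (1 : Matrix (Fin N) (Fin N) ℂ) +
            ((r : ℂ) / 2) • ∑ μ, (a i μ : ℂ) • lam μ) ⊗ₖ
          (((1 : ℂ) / N) • (1 : Matrix (Fin N) (Fin N) ℂ) +
            ((s : ℂ) / 2) • ∑ μ, (a i μ : ℂ) • lam μ))
      = ((1 : ℂ) / N ^ 2) •
          ((1 : Matrix (Fin N) (Fin N) ℂ) ⊗ₖ (1 : Matrix (Fin N) (Fin N) ℂ)) +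
        (((r : ℂ) * s) / (4 * ((N : ℂ) ^ 2 - 1))) • ∑ μ, lam μ ⊗ₖ lam μ := by
  have hN2 : 4 ≤ N ^ 2 := by nlinarith
  have hm : 0 < N ^ 2 - 1 := by omega
  have hcard : Fintype.card (Fin (N ^ 2)) = (N ^ 2 - 1) + 1 := by rw [Fintype.card_fin]; omega
  have hcastm : ((N ^ 2 - 1 : ℕ) : ℝ) = (N : ℝ) ^ 2 - 1 := by
    have : 1 ≤ N ^ 2 := by omega
    push_cast [Nat.cast_sub this]
    ring
  have hcastmC : ((N ^ 2 - 1 : ℕ) : ℂ) = (N : ℂ) ^ 2 - 1 := by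
    have : 1 ≤ N ^ 2 := by omega
    push_cast [Nat.cast_sub this]
    ring
  have hangle' : ∀ i j, i ≠ j → ∑ μ, a i μ * a j μ = -1 / ((N ^ 2 - 1 : ℕ) : ℝ) := by
    intro i j hij; rw [hcastm]; exact hangle i j hij
  obtain ⟨hframe, hzero⟩ := simplex_frame hcard hm a hunit hangle'
  -- complex casts
  have hNne : ((N : ℂ)) ≠ 0 := by
    exact_mod_cast Nat.cast_ne_zero.mpr (by omega)
  have hmne : (N ^ 2 - 1 : ℕ) ≠ 0 := by omega
  have hN2ne : ((N : ℂ) ^ 2 - 1) ≠ 0 := by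
    rw [← hcastmC]
    exact Nat.cast_ne_zero.mpr hmne
  have hzeroC : ∀ μ, ∑ i, ((a i μ : ℂ)) = 0 := by
    intro μ
    have := hzero μ
    exact_mod_cast congrArg (Complex.ofReal) this
  have hframeC : ∀ μ ν, ∑ i, ((a i μ : ℂ) * (a i ν : ℂ)) =
      if μ = ν then (N : ℂ) ^ 2 / ((N : ℂ) ^ 2 - 1) else 0 := by
    intro μ ν
    have h0 := hframe μ ν
    have h1 : ((∑ i, a i μ * a i ν : ℝ) : ℂ)
        = if μ = ν then (N : ℂ) ^ 2 / ((N : ℂ) ^ 2 - 1) else 0 := by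
      rw [h0]
      by_cases h : μ = ν
      · simp only [h, if_true]
        push_cast [hcastm]
        ring_nf
      · simp [h]
    rw [← h1]
    push_cast
    ring_nf
  set u : Matrix (Fin N) (Fin N) ℂ := ((1 : ℂ) / N) • 1 with hu
  set L : Fin (N ^ 2) → Matrix (Fin N) (Fin N) ℂ :=
    fun i => ∑ μ, (a i μ : ℂ) • lam μ with hL
  have hLsum : ∑ i, L i = 0 := by
    rw [hL]
    rw [Finset.sum_comm]
    apply Finset.sum_eq_zero
    intro μ _
    rw [← Finset.sum_smul, hzeroC μ, zero_smul]
  have hLL : ∑ i, L i ⊗ₖ L i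
      = ((N : ℂ) ^ 2 / ((N : ℂ) ^ 2 - 1)) • ∑ μ, lam μ ⊗ₖ lam μ := by
    have h1 : ∀ i, L i ⊗ₖ L i
        = ∑ μ, ∑ ν, ((a i μ : ℂ) * (a i ν : ℂ)) • (lam μ ⊗ₖ lam ν) := by
      intro i
      rw [hL, sum_kronecker]
      apply Finset.sum_congr rfl
      intro μ _
      rw [kronecker_sum]
      apply Finset.sum_congr rfl
      intro ν _
      rw [Matrix.smul_kronecker, Matrix.kronecker_smul, smul_smul]
    calc ∑ i, L i ⊗ₖ L i
        = ∑ μ, ∑ ν, (∑ i, ((a i μ : ℂ) * (a i ν : ℂ))) • (lam μ ⊗ₖ lam ν) := by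
          simp only [h1]
          rw [Finset.sum_comm]
          apply Finset.sum_congr rfl
          intro μ _
          rw [Finset.sum_comm]
          apply Finset.sum_congr rfl
          intro ν _
          rw [Finset.sum_smul]
      _ = ∑ μ, ((N : ℂ) ^ 2 / ((N : ℂ) ^ 2 - 1)) • (lam μ ⊗ₖ lam μ) := by
          apply Finset.sum_congr rfl
          intro μ _
          simp only [hframeC, ite_smul, zero_smul]
          rw [Finset.sum_ite_eq Finset.univ μ (fun ν => ((N : ℂ) ^ 2 / ((N : ℂ) ^ 2 - 1)) • (lam μ ⊗ₖ lam ν))]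
          simp
      _ = ((N : ℂ) ^ 2 / ((N : ℂ) ^ 2 - 1)) • ∑ μ, lam μ ⊗ₖ lam μ := by
          rw [Finset.smul_sum]
  have hexp : ∀ i : Fin (N ^ 2),
      ((1 : ℂ) / N ^ 2) • ((u + ((r : ℂ) / 2) • L i) ⊗ₖ (u + ((s : ℂ) / 2) • L i))
      = ((1 : ℂ) / N ^ 2) • (u ⊗ₖ u)
        + ((1 : ℂ) / N ^ 2 * ((s : ℂ) / 2)) • (u ⊗ₖ L i)
        + ((1 : ℂ) / N ^ 2 * ((r : ℂ) / 2)) • (L i ⊗ₖ u)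
        + ((1 : ℂ) / N ^ 2 * ((r : ℂ) / 2) * ((s : ℂ) / 2)) • (L i ⊗ₖ L i) := by
    intro i
    ext ⟨i1, i2⟩ ⟨j1, j2⟩
    simp only [Matrix.kroneckerMap_apply, Matrix.add_apply, Matrix.smul_apply,
      smul_eq_mul]
    ring
  rw [Finset.sum_congr rfl (fun i _ => hexp i)]
  simp only [Finset.sum_add_distrib, ← Finset.smul_sum]
  rw [← kronecker_sum Finset.univ u L, ← sum_kronecker Finset.univ L u, hLsum, hLL]
  simp only [Matrix.kronecker_zero, Matrix.zero_kronecker, smul_zero, add_zero]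
  rw [Finset.sum_const, Finset.card_univ, hcard]
  have huu : u ⊗ₖ u = ((1 : ℂ) / N * ((1 : ℂ) / N)) • ((1 : Matrix (Fin N) (Fin N) ℂ) ⊗ₖ 1) := by
    rw [hu, Matrix.smul_kronecker, Matrix.kronecker_smul, smul_smul]
  rw [huu, ← Nat.cast_smul_eq_nsmul ℂ]
  simp only [smul_smul]
  congr 1
  · congr 1
    push_cast
    field_simp
    rw [hcastmC]
    ring
  · congr 1
    have h4 : (4 : ℂ) * ((N : ℂ) ^ 2 - 1) ≠ 0 := by
      exact mul_ne_zero (by norm_num) hN2ne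
    field_simp [hNne, hN2ne]
    ring
end

section
/- Let N ≥ 2, let λ_1,…,λ_{N²−1} be N×N complex matrices that are Hermitian, traceless and satisfy Tr[λ_μ λ_ν] = 2δ_{μν}, and let a_1,…,a_{N²} be unit vectors in ℝ^{N²−1} with a_i · a_j = −1/(N²−1) for all i ≠ j. For real numbers r, s and each i define R_i(r) = (1/N)·I + (r/2)·Σ_μ (a_i)_μ λ_μ and S_i(s) = (1/N)·I + (s/2)·Σ_μ (a_i)_μ λ_μ. Then Σ_{i=1}^{N²} (1/N²)·R_i(r) ⊗ S_i(s)ᵀ = (1/N²)·I⊗I + (r·s/(4(N²−1)))·Σ_{μ=1}^{N²−1} λ_μ ⊗ λ_μᵀ, where ⊗ denotes the Kronecker product and Aᵀ is the transpose of A. -/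
open Matrix BigOperators
open scoped Kronecker

private lemma simplex_rowsum (N : ℕ) (hN : 2 ≤ N)
    (a : Fin (N ^ 2) → Fin (N ^ 2 - 1) → ℝ)
    (hunit : ∀ i, ∑ μ, a i μ ^ 2 = 1)
    (hangle : ∀ i j, i ≠ j → ∑ μ, a i μ * a j μ = -1 / ((N : ℝ) ^ 2 - 1))
    (i : Fin (N ^ 2)) :
    ∑ j, (∑ μ, a i μ * a j μ) = 0 := by
  have hNR : (2:ℝ) ≤ N := by exact_mod_cast hN
  have hne : ((N : ℝ) ^ 2 - 1) ≠ 0 := by nlinarith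
  have hcard : ((Finset.univ.erase i).card : ℝ) = (N:ℝ)^2 - 1 := by
    rw [Finset.card_erase_of_mem (Finset.mem_univ i), Finset.card_univ, Fintype.card_fin]
    have h1 : 1 ≤ N ^ 2 := by nlinarith
    push_cast [Nat.cast_sub h1]; ring
  rw [← Finset.sum_erase_add _ _ (Finset.mem_univ i)]
  have h1 : ∑ j ∈ Finset.univ.erase i, (∑ μ, a i μ * a j μ)
      = ∑ _j ∈ Finset.univ.erase i, (-1 / ((N : ℝ) ^ 2 - 1)) :=
    Finset.sum_congr rfl fun j hj => hangle i j (Ne.symm (Finset.ne_of_mem_erase hj))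
  have h2 : ∑ μ, a i μ * a i μ = 1 := by simpa [sq] using hunit i
  rw [h1, h2, Finset.sum_const, nsmul_eq_mul, hcard]
  field_simp
  norm_num

private lemma simplex_centroid (N : ℕ) (hN : 2 ≤ N)
    (a : Fin (N ^ 2) → Fin (N ^ 2 - 1) → ℝ)
    (hunit : ∀ i, ∑ μ, a i μ ^ 2 = 1)
    (hangle : ∀ i j, i ≠ j → ∑ μ, a i μ * a j μ = -1 / ((N : ℝ) ^ 2 - 1))
    (μ : Fin (N ^ 2 - 1)) :
    ∑ i, a i μ = 0 := by
  have key : ∑ ν, (∑ i, a i ν) ^ 2 = 0 := by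
    have h1 : ∑ ν, (∑ i, a i ν) ^ 2 = ∑ i, ∑ j, ∑ ν, a i ν * a j ν := by
      simp only [sq, Finset.sum_mul_sum]
      rw [Finset.sum_comm]
      exact Finset.sum_congr rfl fun _ _ => Finset.sum_comm
    rw [h1]
    exact Finset.sum_eq_zero fun i _ => simplex_rowsum N hN a hunit hangle i
  have h := (Finset.sum_eq_zero_iff_of_nonneg (fun ν _ => sq_nonneg (∑ i, a i ν))).mp key
  exact pow_eq_zero_iff two_ne_zero |>.mp (h μ (Finset.mem_univ μ))

private lemma sum4_comm {R α β : Type*} [AddCommMonoid R] [Fintype α] [Fintype β]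
    (F : α → α → β → β → R) :
    ∑ μ, ∑ ν, ∑ i, ∑ j, F μ ν i j = ∑ i, ∑ j, ∑ μ, ∑ ν, F μ ν i j :=
  calc ∑ μ, ∑ ν, ∑ i, ∑ j, F μ ν i j
      = ∑ μ, ∑ i, ∑ ν, ∑ j, F μ ν i j :=
        Finset.sum_congr rfl fun _ _ => Finset.sum_comm
    _ = ∑ i, ∑ μ, ∑ j, ∑ ν, F μ ν i j := by
        rw [Finset.sum_comm]
        exact Finset.sum_congr rfl fun _ _ => Finset.sum_congr rfl fun _ _ => Finset.sum_comm
    _ = ∑ i, ∑ j, ∑ μ, ∑ ν, F μ ν i j :=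
        Finset.sum_congr rfl fun _ _ => Finset.sum_comm

private lemma simplex_gram (N : ℕ) (hN : 2 ≤ N)
    (a : Fin (N ^ 2) → Fin (N ^ 2 - 1) → ℝ)
    (hunit : ∀ i, ∑ μ, a i μ ^ 2 = 1)
    (hangle : ∀ i j, i ≠ j → ∑ μ, a i μ * a j μ = -1 / ((N : ℝ) ^ 2 - 1))
    (μ ν : Fin (N ^ 2 - 1)) :
    ∑ i, a i μ * a i ν
      = if μ = ν then (N:ℝ)^2 / ((N:ℝ)^2 - 1) else 0 := by
  have hNR : (2:ℝ) ≤ N := by exact_mod_cast hN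
  have hne : ((N : ℝ) ^ 2 - 1) ≠ 0 := by nlinarith
  set c : ℝ := (N:ℝ)^2 / ((N:ℝ)^2 - 1) with hc
  have hgij : ∀ i j, ∑ μ', a i μ' * a j μ' = if i = j then 1 else -1 / ((N : ℝ) ^ 2 - 1) := by
    intro i j
    split_ifs with h
    · subst h; simpa [sq] using hunit i
    · exact hangle i j h
  -- value of ∑_j g i j ^ 2
  have hrow2 : ∀ i : Fin (N ^ 2), ∑ j, (∑ μ', a i μ' * a j μ') ^ 2
      = 1 + 1 / ((N:ℝ)^2 - 1) := by
    intro i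
    have hcard : ((Finset.univ.erase i).card : ℝ) = (N:ℝ)^2 - 1 := by
      rw [Finset.card_erase_of_mem (Finset.mem_univ i), Finset.card_univ, Fintype.card_fin]
      have h1 : 1 ≤ N ^ 2 := by nlinarith
      push_cast [Nat.cast_sub h1]; ring
    rw [← Finset.sum_erase_add _ _ (Finset.mem_univ i)]
    have h1 : ∑ j ∈ Finset.univ.erase i, (∑ μ', a i μ' * a j μ') ^ 2
        = ∑ _j ∈ Finset.univ.erase i, (-1 / ((N : ℝ) ^ 2 - 1)) ^ 2 :=
      Finset.sum_congr rfl fun j hj => by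
        rw [hgij i j, if_neg (Ne.symm (Finset.ne_of_mem_erase hj))]
    rw [h1, hgij i i, if_pos rfl, Finset.sum_const, nsmul_eq_mul, hcard]
    field_simp
    ring
  -- T1
  have hT1 : ∑ μ', ∑ ν', (∑ i, a i μ' * a i ν') ^ 2
      = (N:ℝ)^2 * (1 + 1 / ((N:ℝ)^2 - 1)) := by
    have h1 : ∑ μ', ∑ ν', (∑ i, a i μ' * a i ν') ^ 2
        = ∑ μ', ∑ ν', ∑ i, ∑ j, (a i μ' * a i ν') * (a j μ' * a j ν') := by
      simp only [sq, Finset.sum_mul_sum]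
    rw [h1, sum4_comm]
    have h2 : ∀ i j : Fin (N ^ 2), ∑ μ', ∑ ν', (a i μ' * a i ν') * (a j μ' * a j ν')
        = (∑ μ', a i μ' * a j μ') ^ 2 := by
      intro i j
      have : (∑ μ', a i μ' * a j μ') ^ 2
          = ∑ μ', ∑ ν', (a i μ' * a j μ') * (a i ν' * a j ν') := by
        rw [sq, Finset.sum_mul_sum]
      rw [this]
      exact Finset.sum_congr rfl fun _ _ => Finset.sum_congr rfl fun _ _ => by ring
    calc ∑ i, ∑ j, ∑ μ', ∑ ν', (a i μ' * a i ν') * (a j μ' * a j ν')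
        = ∑ i : Fin (N ^ 2), (1 + 1 / ((N:ℝ)^2 - 1)) := by
          exact Finset.sum_congr rfl fun i _ => by rw [Finset.sum_congr rfl fun j _ => h2 i j, hrow2 i]
      _ = (N:ℝ)^2 * (1 + 1 / ((N:ℝ)^2 - 1)) := by
          rw [Finset.sum_const, nsmul_eq_mul, Finset.card_univ, Fintype.card_fin]; push_cast; ring
  -- T2
  have hT2 : ∑ μ' : Fin (N ^ 2 - 1), (∑ i, a i μ' * a i μ') = (N:ℝ)^2 := by
    rw [Finset.sum_comm]
    have : ∀ i : Fin (N ^ 2), ∑ μ', a i μ' * a i μ' = 1 := fun i => by simpa [sq] using hunit i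
    rw [Finset.sum_congr rfl fun i _ => this i, Finset.sum_const, nsmul_eq_mul,
      Finset.card_univ, Fintype.card_fin]
    push_cast; ring
  have hd : ((Fintype.card (Fin (N ^ 2 - 1)) : ℝ)) = (N:ℝ)^2 - 1 := by
    have h1 : 1 ≤ N ^ 2 := by nlinarith
    rw [Fintype.card_fin]
    push_cast [Nat.cast_sub h1]; ring
  -- the key vanishing sum of squares
  have key : ∑ μ', ∑ ν', (∑ i, a i μ' * a i ν' - (if μ' = ν' then c else 0)) ^ 2 = 0 := by
    have step : ∀ μ', ∑ ν', (∑ i, a i μ' * a i ν' - (if μ' = ν' then c else 0)) ^ 2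
        = (∑ ν', (∑ i, a i μ' * a i ν') ^ 2)
          - (2 * c * (∑ i, a i μ' * a i μ')) + c ^ 2 := by
      intro μ'
      have hterm : ∀ ν', (∑ i, a i μ' * a i ν' - (if μ' = ν' then c else 0)) ^ 2
          = (∑ i, a i μ' * a i ν') ^ 2
            - (if μ' = ν' then 2 * c * (∑ i, a i μ' * a i ν') else 0)
            + (if μ' = ν' then c ^ 2 else 0) := by
        intro ν'; split_ifs <;> ring
      simp only [hterm]
      rw [Finset.sum_add_distrib, Finset.sum_sub_distrib, Finset.sum_ite_eq,
        Finset.sum_ite_eq, if_pos (Finset.mem_univ μ'), if_pos (Finset.mem_univ μ')]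
    rw [Finset.sum_congr rfl fun μ' _ => step μ', Finset.sum_add_distrib,
      Finset.sum_sub_distrib, hT1, Finset.sum_const, nsmul_eq_mul, Finset.card_univ, hd,
      ← Finset.mul_sum, hT2, hc]
    field_simp
    ring
  have h := (Finset.sum_eq_zero_iff_of_nonneg
    (fun μ' _ => Finset.sum_nonneg fun ν' _ => sq_nonneg _)).mp key μ (Finset.mem_univ μ)
  have h2 := (Finset.sum_eq_zero_iff_of_nonneg (fun ν' _ => sq_nonneg _)).mp h ν (Finset.mem_univ ν)
  have h3 := pow_eq_zero_iff two_ne_zero |>.mp h2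
  linarith [h3]

private lemma scalar_key {n2 d : ℕ} (a : Fin n2 → Fin d → ℝ) (c : ℝ)
    (h0 : ∀ μ, ∑ i, a i μ = 0)
    (hg : ∀ μ ν, ∑ i, a i μ * a i ν = if μ = ν then c else 0)
    (x y : Fin d → ℂ) (u v w w1 w2 : ℂ) :
    ∑ i : Fin n2, w * ((u + w1 * ∑ μ, (a i μ : ℂ) * x μ) * (v + w2 * ∑ μ, (a i μ : ℂ) * y μ))
      = (n2 : ℂ) * (w * (u * v)) + w * w1 * w2 * (c : ℂ) * ∑ μ, x μ * y μ := by
  have h0C : ∀ μ, ∑ i, (a i μ : ℂ) = 0 := fun μ => by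
    rw [← Complex.ofReal_sum, h0 μ, Complex.ofReal_zero]
  have hgC : ∀ μ ν, ∑ i, (a i μ : ℂ) * (a i ν : ℂ) = if μ = ν then (c : ℂ) else 0 := by
    intro μ ν
    calc ∑ i, (a i μ : ℂ) * (a i ν : ℂ) = ((∑ i, a i μ * a i ν : ℝ) : ℂ) := by push_cast; rfl
      _ = if μ = ν then (c : ℂ) else 0 := by rw [hg μ ν]; split_ifs <;> simp
  have hX : ∀ i : Fin n2, w * ((u + w1 * ∑ μ, (a i μ : ℂ) * x μ) * (v + w2 * ∑ μ, (a i μ : ℂ) * y μ))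
      = w * (u * v) + (w * u * w2) * (∑ μ, (a i μ : ℂ) * y μ)
        + (w * v * w1) * (∑ μ, (a i μ : ℂ) * x μ)
        + (w * w1 * w2) * ((∑ μ, (a i μ : ℂ) * x μ) * (∑ μ, (a i μ : ℂ) * y μ)) := by
    intro i; ring
  rw [Finset.sum_congr rfl fun i _ => hX i]
  rw [Finset.sum_add_distrib, Finset.sum_add_distrib, Finset.sum_add_distrib]
  have hzero : ∀ (z : Fin d → ℂ) (cst : ℂ), ∑ i : Fin n2, cst * (∑ μ, (a i μ : ℂ) * z μ) = 0 := by
    intro z cst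
    rw [← Finset.mul_sum, Finset.sum_comm]
    have : ∀ μ, ∑ i : Fin n2, (a i μ : ℂ) * z μ = 0 := fun μ => by
      rw [← Finset.sum_mul, h0C μ, zero_mul]
    rw [Finset.sum_congr rfl fun μ _ => this μ, Finset.sum_const, smul_zero, mul_zero]
  have hquad : ∑ i : Fin n2, (∑ μ, (a i μ : ℂ) * x μ) * (∑ μ, (a i μ : ℂ) * y μ)
      = (c : ℂ) * ∑ μ, x μ * y μ := by
    have h1 : ∀ i : Fin n2, (∑ μ, (a i μ : ℂ) * x μ) * (∑ μ, (a i μ : ℂ) * y μ)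
        = ∑ μ, ∑ ν, ((a i μ : ℂ) * (a i ν : ℂ)) * (x μ * y ν) := by
      intro i
      rw [Finset.sum_mul_sum]
      exact Finset.sum_congr rfl fun _ _ => Finset.sum_congr rfl fun _ _ => by ring
    rw [Finset.sum_congr rfl fun i _ => h1 i]
    rw [Finset.sum_comm]
    have h2 : ∀ μ, ∑ ν, ∑ i : Fin n2, ((a i μ : ℂ) * (a i ν : ℂ)) * (x μ * y ν)
        = (c : ℂ) * (x μ * y μ) := by
      intro μ
      have h3 : ∀ ν, ∑ i : Fin n2, ((a i μ : ℂ) * (a i ν : ℂ)) * (x μ * y ν)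
          = (if μ = ν then (c : ℂ) else 0) * (x μ * y ν) := fun ν => by
        rw [← Finset.sum_mul, hgC μ ν]
      rw [Finset.sum_congr rfl fun ν _ => h3 ν]
      simp [ite_mul, Finset.sum_ite_eq]
    rw [Finset.sum_congr rfl fun μ _ => Finset.sum_comm, Finset.sum_congr rfl fun μ _ => h2 μ,
      ← Finset.mul_sum]
  have hq2 : ∑ i : Fin n2, (w * w1 * w2) * ((∑ μ, (a i μ : ℂ) * x μ) * (∑ μ, (a i μ : ℂ) * y μ))
      = w * w1 * w2 * ((c : ℂ) * ∑ μ, x μ * y μ) := by rw [← Finset.mul_sum, hquad]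
  rw [hzero y (w * u * w2), hzero x (w * v * w1), hq2,
    Finset.sum_const, Finset.card_univ, Fintype.card_fin, nsmul_eq_mul]
  ring

/-- Decomposition of the isotropic state in Bloch
representation by an arbitrary regular simplex `a_1, …, a_{N²}` in `ℝ^{N²-1}`:
`Σ_i (1/N²) R_i(r) ⊗ S_i(s)ᵀ = (1/N²) I⊗I + (rs/(4(N²-1))) Σ_μ λ_μ ⊗ λ_μᵀ`. -/
theorem isotropic_simplex_decomposition (N : ℕ) (hN : 2 ≤ N)
    (lam : Fin (N ^ 2 - 1) → Matrix (Fin N) (Fin N) ℂ)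
    (hherm : ∀ μ, (lam μ).IsHermitian)
    (htraceless : ∀ μ, (lam μ).trace = 0)
    (horth : ∀ μ ν, (lam μ * lam ν).trace = if μ = ν then 2 else 0)
    (a : Fin (N ^ 2) → Fin (N ^ 2 - 1) → ℝ)
    (hunit : ∀ i, ∑ μ, a i μ ^ 2 = 1)
    (hangle : ∀ i j, i ≠ j → ∑ μ, a i μ * a j μ = -1 / ((N : ℝ) ^ 2 - 1))
    (r s : ℝ) :
    ∑ i, ((1 : ℂ) / N ^ 2) •
        ((((1 : ℂ) / N) • (1 : Matrix (Fin N) (Fin N) ℂ) +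
            ((r : ℂ) / 2) • ∑ μ, (a i μ : ℂ) • lam μ) ⊗ₖ
          (((1 : ℂ) / N) • (1 : Matrix (Fin N) (Fin N) ℂ) +
            ((s : ℂ) / 2) • ∑ μ, (a i μ : ℂ) • lam μ)ᵀ)
      = ((1 : ℂ) / N ^ 2) •
          ((1 : Matrix (Fin N) (Fin N) ℂ) ⊗ₖ (1 : Matrix (Fin N) (Fin N) ℂ)) +
        (((r : ℂ) * s) / (4 * ((N : ℂ) ^ 2 - 1))) • ∑ μ, lam μ ⊗ₖ (lam μ)ᵀ := by
  have hNR : (2:ℝ) ≤ N := by exact_mod_cast hN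
  have hNC : (N : ℂ) ≠ 0 := by
    exact_mod_cast Nat.cast_ne_zero.mpr (by omega)
  have hEC : ((N : ℂ) ^ 2 - 1) ≠ 0 := by
    have h : ((N : ℝ) ^ 2 - 1) ≠ 0 := by nlinarith
    have := Complex.ofReal_ne_zero.mpr h
    push_cast at this
    convert this using 2
  ext ⟨k1, k2⟩ ⟨l1, l2⟩
  simp only [Matrix.sum_apply, Matrix.add_apply, Matrix.smul_apply, Matrix.kroneckerMap_apply,
    Matrix.transpose_apply, Matrix.one_apply, smul_eq_mul]
  have hδ : (if l2 = k2 then (1:ℂ) else 0) = (if k2 = l2 then (1:ℂ) else 0) := by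
    by_cases h : l2 = k2 <;> simp [h, Ne.symm, eq_comm]
  rw [hδ]
  rw [scalar_key a ((N:ℝ)^2 / ((N:ℝ)^2 - 1))
    (simplex_centroid N hN a hunit hangle) (simplex_gram N hN a hunit hangle)
    (fun μ => lam μ k1 l1) (fun μ => lam μ l2 k2)
    (1 / (N:ℂ) * (if k1 = l1 then 1 else 0)) (1 / (N:ℂ) * (if k2 = l2 then 1 else 0))
    (1 / (N:ℂ) ^ 2) ((r:ℂ) / 2) ((s:ℂ) / 2)]
  push_cast
  set X : ℂ := ∑ μ, lam μ k1 l1 * lam μ l2 k2 with hX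
  set D1 : ℂ := (if k1 = l1 then (1:ℂ) else 0) with hD1
  set D2 : ℂ := (if k2 = l2 then (1:ℂ) else 0) with hD2
  have hu : (-(((N:ℂ))^2*4) + ((N:ℂ))^4*4) ≠ 0 := by
    have h4 : (-(((N:ℂ))^2*4) + ((N:ℂ))^4*4) = 4 * (N:ℂ)^2 * ((N:ℂ)^2 - 1) := by ring
    rw [h4]
    exact mul_ne_zero (mul_ne_zero (by norm_num) (pow_ne_zero 2 hNC)) hEC
  field_simp [hu]
  linear_combination (0:ℂ) * (inv_mul_cancel₀ hu)
end

section
/- Let N ≥ 2, let λ_1,…,λ_{N²−1} be N×N complex matrices that are Hermitian, traceless, satisfy Tr[λ_μ λ_ν] = 2δ_{μν}, and are such that every traceless Hermitian N×N matrix is a real linear combination of the λ_μ. Let ψ_1,…,ψ_{N²} be unit vectors in ℂ^N with |⟨ψ_i, ψ_j⟩|² = 1/(N+1) for all i ≠ j, let P_i be the rank-one projection onto ψ_i, and let r_i ∈ ℝ^{N²−1} be the vector with components (r_i)_μ = Tr[P_i λ_μ]. Then |r_i|² = 2(N−1)/N for every i, and r_i · r_j = −2/(N(N+1)) for all i ≠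 j; consequently (r_i · r_j)/(|r_i|·|r_j|) = −1/(N²−1) for all i ≠ j, i.e., the normalized Bloch vectors r_i/|r_i| form a regular simplex in ℝ^{N²−1}. -/
open Matrix BigOperators

/-- The Bloch vectors of the projectors of a SIC-POVM all
have squared length `2(N-1)/N`, pairwise dot products `-2/(N(N+1))`, and
hence their normalizations form a regular simplex in `ℝ^{N²-1}`. -/
theorem sic_povm_bloch_simplex (N : ℕ) (hN : 2 ≤ N)
    (lam : Fin (N ^ 2 - 1) → Matrix (Fin N) (Fin N) ℂ)
    (hherm : ∀ μ, (lam μ).IsHermitian)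
    (htraceless : ∀ μ, (lam μ).trace = 0)
    (horth : ∀ μ ν, (lam μ * lam ν).trace = if μ = ν then 2 else 0)
    (hcomplete : ∀ M : Matrix (Fin N) (Fin N) ℂ, M.IsHermitian → M.trace = 0 →
      ∃ c : Fin (N ^ 2 - 1) → ℝ, M = ∑ μ, (c μ : ℂ) • lam μ)
    (ψ : Fin (N ^ 2) → Fin N → ℂ)
    (hψ_unit : ∀ i, ∑ k, ‖ψ i k‖ ^ 2 = 1)
    (hψ_sic : ∀ i j, i ≠ j →
      ‖∑ k, (starRingEnd ℂ) (ψ i k) * ψ j k‖ ^ 2 = 1 / ((N : ℝ) + 1))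
    (P : Fin (N ^ 2) → Matrix (Fin N) (Fin N) ℂ)
    (hP : ∀ i, P i = Matrix.vecMulVec (ψ i) (fun l => (starRingEnd ℂ) (ψ i l)))
    (r : Fin (N ^ 2) → Fin (N ^ 2 - 1) → ℝ)
    (hr : ∀ i μ, r i μ = ((P i * lam μ).trace).re) :
    (∀ i, ∑ μ, r i μ ^ 2 = 2 * ((N : ℝ) - 1) / N) ∧
    (∀ i j, i ≠ j → ∑ μ, r i μ * r j μ = -2 / ((N : ℝ) * ((N : ℝ) + 1))) ∧
    (∀ i j, i ≠ j →
      (∑ μ, r i μ * r j μ) /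
        (Real.sqrt (∑ μ, r i μ ^ 2) * Real.sqrt (∑ μ, r j μ ^ 2))
        = -1 / ((N : ℝ) ^ 2 - 1)) := by
  have hNR : (2:ℝ) ≤ (N:ℝ) := by exact_mod_cast hN
  have hN0 : (N:ℝ) ≠ 0 := by linarith
  have hN1 : (N:ℝ) + 1 ≠ 0 := by linarith
  set z : Fin (N^2) → Fin (N^2) → ℂ :=
    fun i j => ∑ k, (starRingEnd ℂ) (ψ i k) * ψ j k with hz
  -- trace of product of projections
  have htrP : ∀ i j, (P i * P j).trace = ((‖z i j‖ ^ 2 : ℝ) : ℂ) := by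
    intro i j
    have h1 : (P i * P j).trace
        = (∑ k, ψ i k * (starRingEnd ℂ) (ψ j k)) * z i j := by
      simp only [hP, Matrix.trace, Matrix.diag_apply, Matrix.mul_apply,
        Matrix.vecMulVec_apply, hz]
      rw [Finset.sum_mul_sum]
      apply Finset.sum_congr rfl; intro m _
      apply Finset.sum_congr rfl; intro k _
      ring
    rw [h1]
    have h2 : (∑ k, ψ i k * (starRingEnd ℂ) (ψ j k)) = (starRingEnd ℂ) (z i j) := by
      rw [hz]
      rw [map_sum]
      refine Finset.sum_congr rfl fun k _ => ?_
      rw [_root_.map_mul, Complex.conj_conj]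
    rw [h2, mul_comm, Complex.mul_conj]
    norm_cast
    rw [Complex.sq_norm]
  -- self inner product
  have hzii : ∀ i, ‖z i i‖ ^ 2 = 1 := by
    intro i
    have h : z i i = ((∑ k, ‖ψ i k‖ ^ 2 : ℝ) : ℂ) := by
      rw [hz]; push_cast
      refine Finset.sum_congr rfl fun k _ => ?_
      rw [mul_comm, Complex.mul_conj]
      norm_cast
      rw [Complex.sq_norm]
    rw [h, hψ_unit]
    simp
  -- P is Hermitian
  have hPh : ∀ i, (P i).IsHermitian := by
    intro i
    rw [Matrix.IsHermitian]
    ext k l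
    simp [hP, Matrix.conjTranspose_apply, Matrix.vecMulVec_apply, mul_comm]
  -- trace of P
  have htrPi : ∀ i, (P i).trace = 1 := by
    intro i
    have h : (P i).trace = ((∑ k, ‖ψ i k‖ ^ 2 : ℝ) : ℂ) := by
      simp only [hP, Matrix.trace, Matrix.diag_apply, Matrix.vecMulVec_apply]
      push_cast
      refine Finset.sum_congr rfl fun k _ => ?_
      rw [Complex.mul_conj]
      norm_cast
      rw [Complex.sq_norm]
    rw [h, hψ_unit]; norm_num
  -- decomposition: P i = N⁻¹ • 1 + ∑ c μ • lam μ
  have hdecomp : ∀ i, ∃ c : Fin (N ^ 2 - 1) → ℝ,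
      P i = ((N:ℂ))⁻¹ • 1 + ∑ μ, (c μ : ℂ) • lam μ := by
    intro i
    have hMh : (P i - ((N:ℂ))⁻¹ • 1).IsHermitian := by
      apply (hPh i).sub
      rw [Matrix.IsHermitian, Matrix.conjTranspose_smul, Matrix.conjTranspose_one]
      norm_num
    have hMt : (P i - ((N:ℂ))⁻¹ • 1).trace = 0 := by
      rw [Matrix.trace_sub, htrPi, Matrix.trace_smul, Matrix.trace_one]
      simp only [Fintype.card_fin, smul_eq_mul]
      rw [inv_mul_cancel₀ (by exact_mod_cast hN0 : (N:ℂ) ≠ 0)]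
      ring
    obtain ⟨c, hc⟩ := hcomplete _ hMh hMt
    exact ⟨c, by rw [← hc]; abel⟩
  choose c hc using hdecomp
  -- r in terms of c
  have hrc : ∀ i μ, r i μ = 2 * c i μ := by
    intro i μ
    have ht : (P i * lam μ).trace = 2 * (c i μ : ℂ) := by
      rw [hc i, add_mul, Matrix.trace_add, Matrix.smul_mul, Matrix.trace_smul,
        one_mul, htraceless, Finset.sum_mul, Matrix.trace_sum]
      simp only [Matrix.smul_mul, Matrix.trace_smul, horth, smul_eq_mul,
        mul_ite, mul_zero, smul_zero, add_zero]
      simp [Finset.sum_ite_eq', mul_comm]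
    rw [hr, ht]
    norm_cast
  -- trace of product via decomposition
  have ht2 : ∀ i j, (P i * P j).trace = ((N:ℂ))⁻¹ + ∑ μ, 2 * (c i μ : ℂ) * (c j μ) := by
    intro i j
    have hS : ∀ a : Fin (N ^ 2 - 1) → ℝ, (∑ μ, ((a μ : ℂ)) • lam μ).trace = 0 := by
      intro a
      rw [Matrix.trace_sum]
      simp [Matrix.trace_smul, htraceless]
    rw [hc i, hc j]
    rw [add_mul, mul_add, mul_add, Matrix.trace_add, Matrix.trace_add, Matrix.trace_add]
    have e1 : ((((N:ℂ))⁻¹ • 1 : Matrix (Fin N) (Fin N) ℂ) * ((N:ℂ))⁻¹ • 1).trace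
        = ((N:ℂ))⁻¹ := by
      rw [Matrix.smul_mul, Matrix.mul_smul, one_mul, Matrix.trace_smul,
        Matrix.trace_smul, Matrix.trace_one]
      simp only [Fintype.card_fin, smul_eq_mul]
      field_simp
    have e2 : ((((N:ℂ))⁻¹ • 1 : Matrix (Fin N) (Fin N) ℂ) * ∑ μ, ((c j μ : ℂ)) • lam μ).trace = 0 := by
      rw [Matrix.smul_mul, one_mul, Matrix.trace_smul, hS]
      simp
    have e3 : ((∑ μ, ((c i μ : ℂ)) • lam μ) * (((N:ℂ))⁻¹ • 1 : Matrix (Fin N) (Fin N) ℂ)).trace = 0 := by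
      rw [Matrix.mul_smul, mul_one, Matrix.trace_smul, hS]
      simp
    have e4 : ((∑ μ, ((c i μ : ℂ)) • lam μ) * ∑ ν, ((c j ν : ℂ)) • lam ν).trace
        = ∑ μ, 2 * (c i μ : ℂ) * (c j μ) := by
      rw [Finset.sum_mul, Matrix.trace_sum]
      refine Finset.sum_congr rfl fun μ _ => ?_
      rw [Matrix.smul_mul, Matrix.trace_smul, Finset.mul_sum, Matrix.trace_sum]
      simp only [Matrix.mul_smul, Matrix.trace_smul, horth, smul_eq_mul,
        mul_ite, mul_zero]
      simp [Finset.sum_ite_eq', mul_comm, mul_assoc, mul_left_comm]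
    rw [e1, e2, e3, e4]
    ring
  -- the key sum formula
  have hsum : ∀ i j, ∑ μ, r i μ * r j μ = 2 * ‖z i j‖ ^ 2 - 2 / N := by
    intro i j
    have hre : ((P i * P j).trace).re = ‖z i j‖ ^ 2 := by
      rw [htrP, Complex.ofReal_re]
    have hre2 : ((P i * P j).trace).re = (N:ℝ)⁻¹ + ∑ μ, 2 * c i μ * c j μ := by
      rw [ht2]
      push_cast
      simp [Complex.add_re, Complex.re_sum]
    have key : ∑ μ, 2 * c i μ * c j μ = ‖z i j‖ ^ 2 - (N:ℝ)⁻¹ := by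
      have h := hre2
      rw [hre] at h
      linarith
    calc ∑ μ, r i μ * r j μ = ∑ μ, 2 * (2 * c i μ * c j μ) := by
          refine Finset.sum_congr rfl fun μ _ => ?_
          rw [hrc, hrc]; ring
      _ = 2 * ∑ μ, 2 * c i μ * c j μ := by rw [Finset.mul_sum]
      _ = 2 * ‖z i j‖ ^ 2 - 2 / N := by rw [key]; field_simp
  have part1 : ∀ i, ∑ μ, r i μ ^ 2 = 2 * ((N : ℝ) - 1) / N := by
    intro i
    have : ∑ μ, r i μ ^ 2 = ∑ μ, r i μ * r i μ := by
      refine Finset.sum_congr rfl fun μ _ => sq (r i μ) ▸ by ring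
    rw [this, hsum, hzii]
    field_simp
  have part2 : ∀ i j, i ≠ j → ∑ μ, r i μ * r j μ = -2 / ((N : ℝ) * ((N : ℝ) + 1)) := by
    intro i j hij
    rw [hsum, hψ_sic i j hij]
    field_simp
    ring
  refine ⟨part1, part2, fun i j hij => ?_⟩
  have hlen : (0:ℝ) ≤ 2 * ((N : ℝ) - 1) / N := div_nonneg (by linarith) (by linarith)
  rw [part1 i, part1 j, part2 i j hij, Real.mul_self_sqrt hlen]
  have h1 : (N:ℝ) - 1 ≠ 0 := by linarith
  have h2 : (N:ℝ) ^ 2 - 1 ≠ 0 := by nlinarith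
  field_simp
  ring
end

section
/- Let N ≥ 2, let λ_1,…,λ_{N²−1} be N×N complex matrices that are Hermitian, traceless, satisfy Tr[λ_μ λ_ν] = 2δ_{μν}, and are such that every traceless Hermitian N×N matrix is a real linear combination of the λ_μ. Let ψ_1,…,ψ_{N²} be unit vectors in ℂ^N with |⟨ψ_i, ψ_j⟩|² = 1/(N+1) for all i ≠ j, let P_i be the rank-one projection onto ψ_i, let r_i ∈ ℝ^{N²−1} have components (r_i)_μ = Tr[P_i λ_μ], and set â_i = r_i/|r_i|. Then for every real τ with −2/N ≤ τ ≤ 2(N−1)/N there exist real numbers r and s, each lying in the interval [−√(2/(N(N−1))), √(2(N−1)/N)], with r·s = τ, such that all the matrices R_i = (1/N)·I + (r/2)·Σ_μ (â_i)_μ λ_μ and S_i = (1/N)·I + (s/2)·Σ_μ (â_i)_μ λ_μ are positive semidefinite with trace one, and (1/N²)·I⊗I + (τ/(4(N²−1)))·Σ_{μ=1}^{N²−1} λ_μ ⊗ λ_μᵀ = Σ_{i=1}^{N²} (1/N²)·R_i ⊗ S_iᵀ. -/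
open Matrix BigOperators
open scoped Kronecker ComplexOrder

lemma aux_sum_kron_left {l m p q : Type*} [Fintype l] {ι : Type*} (s : Finset ι)
    (f : ι → Matrix m p ℂ) (B : Matrix l q ℂ) :
    (∑ i ∈ s, f i) ⊗ₖ B = ∑ i ∈ s, (f i) ⊗ₖ B := by
  ext ⟨a,b⟩ ⟨c,d⟩
  simp [Matrix.kroneckerMap_apply, Matrix.sum_apply, Finset.sum_mul]

lemma aux_kron_sum_right {l m p q : Type*} [Fintype l] {ι : Type*} (s : Finset ι)
    (A : Matrix m p ℂ) (f : ι → Matrix l q ℂ) :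
    A ⊗ₖ (∑ i ∈ s, f i) = ∑ i ∈ s, A ⊗ₖ (f i) := by
  ext ⟨a,b⟩ ⟨c,d⟩
  simp [Matrix.kroneckerMap_apply, Matrix.sum_apply, Finset.mul_sum]

lemma aux_sum_sum_ite {ι : Type*} [Fintype ι] [DecidableEq ι] (A B : ℝ) :
    ∑ i : ι, ∑ j : ι, (if i = j then A else B)
      = (Fintype.card ι : ℝ) * A + (Fintype.card ι : ℝ) * ((Fintype.card ι : ℝ) - 1) * B := by
  have h : ∀ i : ι, ∑ j : ι, (if i = j then A else B)
      = (A - B) + (Fintype.card ι : ℝ) * B := by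
    intro i
    have : ∀ j : ι, (if i = j then A else B) = (if i = j then A - B else 0) + B := by
      intro j; by_cases h : i = j <;> simp [h]
    simp only [this, Finset.sum_add_distrib, Finset.sum_ite_eq, Finset.mem_univ, if_true,
      Finset.sum_const, Finset.card_univ, nsmul_eq_mul]
  simp only [h, Finset.sum_const, Finset.card_univ, nsmul_eq_mul]
  ring

lemma aux_cs {n : ℕ} (ψ x : Fin n → ℂ) :
    ‖∑ k, (starRingEnd ℂ) (ψ k) * x k‖ ^ 2
      ≤ (∑ k, ‖ψ k‖ ^ 2) * (∑ k, ‖x k‖ ^ 2) := by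
  let ψ' : EuclideanSpace ℂ (Fin n) := (WithLp.equiv 2 _).symm ψ
  let x' : EuclideanSpace ℂ (Fin n) := (WithLp.equiv 2 _).symm x
  have hip : (inner ℂ ψ' x' : ℂ) = ∑ k, (starRingEnd ℂ) (ψ k) * x k := by
    simp [ψ', x', PiLp.inner_apply, RCLike.inner_apply, mul_comm]
  have hcs := norm_inner_le_norm (𝕜 := ℂ) ψ' x'
  have h1 : ‖ψ'‖ ^ 2 = ∑ k, ‖ψ k‖ ^ 2 := by
    rw [EuclideanSpace.norm_eq, Real.sq_sqrt (by positivity)]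
    simp [ψ']
  have h2 : ‖x'‖ ^ 2 = ∑ k, ‖x k‖ ^ 2 := by
    rw [EuclideanSpace.norm_eq, Real.sq_sqrt (by positivity)]
    simp [x']
  calc ‖∑ k, (starRingEnd ℂ) (ψ k) * x k‖ ^ 2
      = ‖(inner ℂ ψ' x' : ℂ)‖ ^ 2 := by rw [hip]
    _ ≤ (‖ψ'‖ * ‖x'‖) ^ 2 := by
        apply pow_le_pow_left₀ (norm_nonneg _) hcs
    _ = (∑ k, ‖ψ k‖ ^ 2) * (∑ k, ‖x k‖ ^ 2) := by
        rw [mul_pow, h1, h2]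

lemma aux_psd (N : ℕ) (hN : 2 ≤ N) (ψ : Fin N → ℂ)
    (hψ : ∑ k, ‖ψ k‖ ^ 2 = 1) (t : ℝ)
    (h1 : -(1 / ((N : ℝ) - 1)) ≤ t) (h2 : t ≤ 1) :
    ((((1 - t) / N : ℝ) : ℂ) • (1 : Matrix (Fin N) (Fin N) ℂ) +
      (t : ℂ) • Matrix.vecMulVec ψ (fun l => (starRingEnd ℂ) (ψ l))).PosSemidef := by
  have hN1 : (0 : ℝ) < (N : ℝ) - 1 := by
    have : (2:ℝ) ≤ N := by exact_mod_cast hN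
    linarith
  refine Matrix.PosSemidef.of_dotProduct_mulVec_nonneg ?_ ?_
  · -- Hermitian
    unfold Matrix.IsHermitian
    rw [Matrix.conjTranspose_add, Matrix.conjTranspose_smul, Matrix.conjTranspose_smul,
      Matrix.conjTranspose_one]
    rw [Complex.star_def, Complex.conj_ofReal, Complex.conj_ofReal]
    congr 2
    ext a b
    simp [Matrix.conjTranspose_apply, Matrix.vecMulVec_apply, mul_comm]
  · intro x
    set u : ℂ := ∑ k, (starRingEnd ℂ) (ψ k) * x k with hu
    set X : ℝ := ∑ k, ‖x k‖ ^ 2 with hX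
    have hPv : Matrix.vecMulVec ψ (fun l => (starRingEnd ℂ) (ψ l)) *ᵥ x = fun a => ψ a * u := by
      funext a
      simp [Matrix.mulVec, dotProduct, Matrix.vecMulVec_apply, hu, Finset.mul_sum,
        mul_assoc]
    have hMv : ((((1 - t) / N : ℝ) : ℂ) • (1 : Matrix (Fin N) (Fin N) ℂ) +
        (t : ℂ) • Matrix.vecMulVec ψ (fun l => (starRingEnd ℂ) (ψ l))) *ᵥ x
        = (((1 - t) / N : ℝ) : ℂ) • x + (t : ℂ) • fun a => ψ a * u := by
      rw [Matrix.add_mulVec, Matrix.smul_mulVec, Matrix.smul_mulVec,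
        Matrix.one_mulVec, hPv]
    rw [hMv, dotProduct_add, dotProduct_smul, dotProduct_smul]
    have e1 : star x ⬝ᵥ x = (X : ℂ) := by
      simp only [dotProduct, Pi.star_apply, hX]
      push_cast
      congr 1; funext a
      rw [Complex.star_def, ← Complex.normSq_eq_conj_mul_self]
      norm_cast
      rw [Complex.sq_norm]
    have e2 : star x ⬝ᵥ (fun a => ψ a * u) = ((‖u‖ ^ 2 : ℝ) : ℂ) := by
      have : star x ⬝ᵥ (fun a => ψ a * u) = (∑ a, star (x a) * ψ a) * u := by
        simp [dotProduct, Finset.sum_mul, mul_assoc]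
      rw [this]
      have hsu : (∑ a, star (x a) * ψ a) = star u := by
        rw [hu, star_sum]
        congr 1; funext a
        simp [Complex.star_def, mul_comm]
      rw [hsu, Complex.star_def, ← Complex.normSq_eq_conj_mul_self]
      norm_cast
      rw [Complex.sq_norm]
    rw [e1, e2, smul_eq_mul, smul_eq_mul]
    have : (((1 - t) / N : ℝ) : ℂ) * (X:ℂ) + (t:ℂ) * ((‖u‖ ^ 2 : ℝ):ℂ)
        = (((1 - t) / N * X + t * ‖u‖ ^ 2 : ℝ) : ℂ) := by push_cast; ring
    rw [this]
    rw [Complex.zero_le_real]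
    have hXnn : 0 ≤ X := by positivity
    have hU : ‖u‖ ^ 2 ≤ X := by
      have := aux_cs ψ x
      rw [hψ, one_mul] at this
      exact this
    have hUnn : 0 ≤ ‖u‖ ^ 2 := by positivity
    have hNnn : (0:ℝ) < N := by positivity
    rcases le_or_gt 0 t with ht | ht
    · have : 0 ≤ (1 - t) / N := by
        apply div_nonneg <;> linarith
      nlinarith
    · have key : 0 ≤ 1 + ((N:ℝ) - 1) * t := by
        have hmul := mul_le_mul_of_nonneg_left h1 (le_of_lt hN1)
        have heq : ((N:ℝ) - 1) * -(1 / ((N:ℝ) - 1)) = -1 := by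
          field_simp
        linarith
      have expand : (1 - t) / N * X + t * ‖u‖ ^ 2
          ≥ (1 - t) / N * X + t * X := by
        have := mul_le_mul_of_nonpos_left hU (le_of_lt ht)
        linarith
      have : (1 - t) / N * X + t * X = (1 + ((N:ℝ)-1) * t) / N * X := by
        field_simp; ring
      nlinarith [mul_nonneg (div_nonneg (by nlinarith : (0:ℝ) ≤ 1 + ((N:ℝ)-1)*t) (le_of_lt hNnn)) hXnn]


lemma aux_swap2 {ι κ : Type*} [Fintype ι] [Fintype κ] (f : ι → κ → ℝ) :
    ∑ μ : κ, (∑ i : ι, f i μ)^2 = ∑ i : ι, ∑ j : ι, ∑ μ : κ, f i μ * f j μ := by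
  have e : ∀ μ : κ, (∑ i : ι, f i μ)^2 = ∑ i : ι, ∑ j : ι, f i μ * f j μ := by
    intro μ
    rw [sq, Finset.sum_mul_sum]
  simp only [e]
  rw [Finset.sum_comm]
  exact Finset.sum_congr rfl fun i _ => by rw [Finset.sum_comm]

lemma aux_swap24 {ι κ : Type*} [Fintype ι] [Fintype κ] (f : ι → κ → ℝ) :
    ∑ μ : κ, ∑ ν : κ, (∑ i : ι, f i μ * f i ν)^2
      = ∑ i : ι, ∑ j : ι, (∑ μ : κ, f i μ * f j μ)^2 := by
  have e : ∀ μ ν : κ, (∑ i : ι, f i μ * f i ν)^2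
      = ∑ i : ι, ∑ j : ι, (f i μ * f j μ) * (f i ν * f j ν) := by
    intro μ ν
    rw [sq, Finset.sum_mul_sum]
    refine Finset.sum_congr rfl fun i _ => Finset.sum_congr rfl fun j _ => by ring
  simp only [e]
  calc ∑ μ : κ, ∑ ν : κ, ∑ i : ι, ∑ j : ι, (f i μ * f j μ) * (f i ν * f j ν)
      = ∑ μ : κ, ∑ i : ι, ∑ ν : κ, ∑ j : ι, (f i μ * f j μ) * (f i ν * f j ν) :=
        Finset.sum_congr rfl fun μ _ => by rw [Finset.sum_comm]
    _ = ∑ μ : κ, ∑ i : ι, ∑ j : ι, ∑ ν : κ, (f i μ * f j μ) * (f i ν * f j ν) :=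
        Finset.sum_congr rfl fun μ _ => Finset.sum_congr rfl fun i _ => by rw [Finset.sum_comm]
    _ = ∑ i : ι, ∑ μ : κ, ∑ j : ι, ∑ ν : κ, (f i μ * f j μ) * (f i ν * f j ν) :=
        by rw [Finset.sum_comm]
    _ = ∑ i : ι, ∑ j : ι, ∑ μ : κ, ∑ ν : κ, (f i μ * f j μ) * (f i ν * f j ν) :=
        Finset.sum_congr rfl fun i _ => by rw [Finset.sum_comm]
    _ = ∑ i : ι, ∑ j : ι, (∑ μ : κ, f i μ * f j μ)^2 :=
        Finset.sum_congr rfl fun i _ => Finset.sum_congr rfl fun j _ => by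
          rw [sq, Finset.sum_mul_sum]

set_option maxHeartbeats 1000000

/-- **Statement 10.** (Theorem 1 of the paper.)  Given a complete generator
family, a SIC-POVM and the regular simplex `â_i` of its normalized Bloch
vectors, every separable isotropic state, i.e. `-2/N ≤ τ ≤ 2(N-1)/N`, admits the
separable decomposition
`ρ_I(τ) = Σ_i (1/N²) R_i(r) ⊗ S_i(s)ᵀ` with `r·s = τ` and all `R_i, S_i`
positive semidefinite trace-one matrices. -/
theorem isotropic_separable_decomposition (N : ℕ) (hN : 2 ≤ N)
    (lam : Fin (N ^ 2 - 1) → Matrix (Fin N) (Fin N) ℂ)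
    (hherm : ∀ μ, (lam μ).IsHermitian)
    (htraceless : ∀ μ, (lam μ).trace = 0)
    (horth : ∀ μ ν, (lam μ * lam ν).trace = if μ = ν then 2 else 0)
    (hcomplete : ∀ M : Matrix (Fin N) (Fin N) ℂ, M.IsHermitian → M.trace = 0 →
      ∃ c : Fin (N ^ 2 - 1) → ℝ, M = ∑ μ, (c μ : ℂ) • lam μ)
    (ψ : Fin (N ^ 2) → Fin N → ℂ)
    (hψ_unit : ∀ i, ∑ k, ‖ψ i k‖ ^ 2 = 1)
    (hψ_sic : ∀ i j, i ≠ j →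
      ‖∑ k, (starRingEnd ℂ) (ψ i k) * ψ j k‖ ^ 2 = 1 / ((N : ℝ) + 1))
    (P : Fin (N ^ 2) → Matrix (Fin N) (Fin N) ℂ)
    (hP : ∀ i, P i = Matrix.vecMulVec (ψ i) (fun l => (starRingEnd ℂ) (ψ i l)))
    (rB : Fin (N ^ 2) → Fin (N ^ 2 - 1) → ℝ)
    (hrB : ∀ i μ, rB i μ = ((P i * lam μ).trace).re)
    (ahat : Fin (N ^ 2) → Fin (N ^ 2 - 1) → ℝ)
    (hahat : ∀ i μ, ahat i μ = rB i μ / Real.sqrt (∑ ν, rB i ν ^ 2))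
    (τ : ℝ) (hτ₁ : -2 / N ≤ τ) (hτ₂ : τ ≤ 2 * ((N : ℝ) - 1) / N) :
    ∃ r s : ℝ,
      (-Real.sqrt (2 / ((N : ℝ) * ((N : ℝ) - 1))) ≤ r ∧
        r ≤ Real.sqrt (2 * ((N : ℝ) - 1) / N)) ∧
      (-Real.sqrt (2 / ((N : ℝ) * ((N : ℝ) - 1))) ≤ s ∧
        s ≤ Real.sqrt (2 * ((N : ℝ) - 1) / N)) ∧
      r * s = τ ∧
      (∀ i, (((1 : ℂ) / N) • (1 : Matrix (Fin N) (Fin N) ℂ) +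
          ((r : ℂ) / 2) • ∑ μ, (ahat i μ : ℂ) • lam μ).PosSemidef ∧
        (((1 : ℂ) / N) • (1 : Matrix (Fin N) (Fin N) ℂ) +
          ((r : ℂ) / 2) • ∑ μ, (ahat i μ : ℂ) • lam μ).trace = 1) ∧
      (∀ i, (((1 : ℂ) / N) • (1 : Matrix (Fin N) (Fin N) ℂ) +
          ((s : ℂ) / 2) • ∑ μ, (ahat i μ : ℂ) • lam μ).PosSemidef ∧
        (((1 : ℂ) / N) • (1 : Matrix (Fin N) (Fin N) ℂ) +
          ((s : ℂ) / 2) • ∑ μ, (ahat i μ : ℂ) • lam μ).trace = 1) ∧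
      ((1 : ℂ) / N ^ 2) •
          ((1 : Matrix (Fin N) (Fin N) ℂ) ⊗ₖ (1 : Matrix (Fin N) (Fin N) ℂ)) +
        ((τ : ℂ) / (4 * ((N : ℂ) ^ 2 - 1))) • ∑ μ, lam μ ⊗ₖ (lam μ)ᵀ
        = ∑ i, ((1 : ℂ) / N ^ 2) •
            ((((1 : ℂ) / N) • (1 : Matrix (Fin N) (Fin N) ℂ) +
                ((r : ℂ) / 2) • ∑ μ, (ahat i μ : ℂ) • lam μ) ⊗ₖ
              (((1 : ℂ) / N) • (1 : Matrix (Fin N) (Fin N) ℂ) +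
                ((s : ℂ) / 2) • ∑ μ, (ahat i μ : ℂ) • lam μ)ᵀ) := by
  -- basic numeric facts
  have hNR : (0:ℝ) < N := by positivity
  have hNR1 : (0:ℝ) < (N:ℝ) - 1 := by
    have : (2:ℝ) ≤ N := by exact_mod_cast hN
    linarith
  have hN0 : (N:ℂ) ≠ 0 := by exact_mod_cast hNR.ne'
  have hN2C : ((N:ℂ)^2 - 1) ≠ 0 := by
    intro h
    have : ((N:ℂ) - 1) * ((N:ℂ) + 1) = 0 := by linear_combination h
    rcases mul_eq_zero.mp this with h' | h'
    · have : (N:ℂ) = 1 := by linear_combination h'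
      have : (N:ℝ) = 1 := by exact_mod_cast this
      linarith
    · have : (N:ℂ) = -1 := by linear_combination h'
      have : (N:ℝ) = -1 := by exact_mod_cast this
      linarith
  -- inner products
  set S : Fin (N^2) → Fin (N^2) → ℂ := fun i j => ∑ k, (starRingEnd ℂ) (ψ i k) * ψ j k with hS
  have hSii : ∀ i, S i i = 1 := by
    intro i
    rw [hS]
    have : ∀ k, (starRingEnd ℂ) (ψ i k) * ψ i k = ((‖ψ i k‖ ^ 2 : ℝ) : ℂ) := by
      intro k
      rw [← Complex.normSq_eq_conj_mul_self]
      norm_cast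
      rw [Complex.sq_norm]
    simp only [this]
    rw [← Complex.ofReal_sum]
    rw [hψ_unit i]
    norm_num
  have habs : ∀ i j, (‖S i j‖)^2 = if i = j then 1 else 1/((N:ℝ)+1) := by
    intro i j
    by_cases h : i = j
    · subst h; rw [hSii i]; simp
    · rw [if_neg h]; exact hψ_sic i j h
  have trP : ∀ i, (P i).trace = 1 := by
    intro i
    rw [hP i]
    rw [Matrix.trace]
    have : ∀ k, (Matrix.vecMulVec (ψ i) fun l => (starRingEnd ℂ) (ψ i l)).diag k
        = (starRingEnd ℂ) (ψ i k) * ψ i k := by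
      intro k; simp [Matrix.diag, Matrix.vecMulVec_apply, mul_comm]
    simp only [this]
    exact hSii i
  have trPP : ∀ i j, (P i * P j).trace = (((‖S i j‖)^2 : ℝ) : ℂ) := by
    intro i j
    rw [hP i, hP j]
    have expand : (Matrix.vecMulVec (ψ i) (fun l => (starRingEnd ℂ) (ψ i l)) *
        Matrix.vecMulVec (ψ j) (fun l => (starRingEnd ℂ) (ψ j l))).trace
        = (∑ a, ψ i a * (starRingEnd ℂ) (ψ j a)) * S i j := by
      rw [Matrix.trace]
      simp only [Matrix.diag, Matrix.mul_apply, Matrix.vecMulVec_apply]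
      rw [Finset.sum_mul]
      congr 1; funext a
      rw [hS]
      simp only [Finset.mul_sum, Finset.sum_mul]
      congr 1; funext k
      ring
    rw [expand]
    have : (∑ a, ψ i a * (starRingEnd ℂ) (ψ j a)) = (starRingEnd ℂ) (S i j) := by
      rw [hS, map_sum]
      congr 1; funext a
      simp [mul_comm]
    rw [this, ← Complex.normSq_eq_conj_mul_self]
    norm_cast
    rw [Complex.sq_norm]
  have hPH : ∀ i, (P i).IsHermitian := by
    intro i
    rw [hP i]
    unfold Matrix.IsHermitian
    ext a b
    simp [Matrix.conjTranspose_apply, Matrix.vecMulVec_apply, mul_comm]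
  -- Bloch decomposition
  have hQH : ∀ i, (P i - ((1:ℂ)/N) • 1).IsHermitian := by
    intro i
    apply Matrix.IsHermitian.sub (hPH i)
    unfold Matrix.IsHermitian
    rw [Matrix.conjTranspose_smul, Matrix.conjTranspose_one]
    congr 1
    simp [Complex.star_def, map_div₀]
  have trQ : ∀ i, (P i - ((1:ℂ)/N) • 1).trace = 0 := by
    intro i
    rw [Matrix.trace_sub, trP i, Matrix.trace_smul, Matrix.trace_one, Fintype.card_fin]
    simp only [smul_eq_mul]
    field_simp
    norm_num
  choose c hc using fun i => hcomplete (P i - ((1:ℂ)/N) • 1) (hQH i) (trQ i)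
  have htrQlam : ∀ i μ, ((P i - ((1:ℂ)/N) • 1) * lam μ).trace = 2 * (c i μ : ℂ) := by
    intro i μ
    rw [hc i, Matrix.sum_mul, Matrix.trace_sum]
    have : ∀ ν, ((c i ν : ℂ) • lam ν * lam μ).trace = (c i ν : ℂ) * (if ν = μ then 2 else 0) := by
      intro ν
      rw [Matrix.smul_mul, Matrix.trace_smul, smul_eq_mul, horth]
    simp only [this]
    simp only [this, mul_ite, mul_zero]
    rw [Finset.sum_ite_eq' Finset.univ μ (fun ν => (c i ν : ℂ) * 2)]
    simp [mul_comm]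
  have htrPlam : ∀ i μ, (P i * lam μ).trace = 2 * (c i μ : ℂ) := by
    intro i μ
    have : P i * lam μ = (P i - ((1:ℂ)/N) • 1) * lam μ + ((1:ℂ)/N) • lam μ := by
      rw [Matrix.sub_mul, Matrix.smul_mul, Matrix.one_mul]
      ring_nf
      abel
    rw [this, Matrix.trace_add, htrQlam, Matrix.trace_smul, htraceless]
    simp
  have hrBc : ∀ i μ, rB i μ = 2 * c i μ := by
    intro i μ
    rw [hrB i μ, htrPlam i μ]
    have : (2 * (c i μ : ℂ)) = ((2 * c i μ : ℝ) : ℂ) := by push_cast; ring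
    rw [this, Complex.ofReal_re]
  -- Gram matrix of Bloch vectors
  set g : Fin (N^2) → Fin (N^2) → ℝ := fun i j => ∑ μ, rB i μ * rB j μ with hgdef
  have htrQQ : ∀ i j, ((P i - ((1:ℂ)/N) • 1) * (P j - ((1:ℂ)/N) • 1)).trace
      = (((‖S i j‖)^2 - 1/N : ℝ) : ℂ) := by
    intro i j
    have expand : (P i - ((1:ℂ)/N) • 1) * (P j - ((1:ℂ)/N) • 1)
        = P i * P j - ((1:ℂ)/N) • P i - ((1:ℂ)/N) • P j + (((1:ℂ)/N) * ((1:ℂ)/N)) • 1 := by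
      simp only [Matrix.sub_mul, Matrix.mul_sub, Matrix.smul_mul, Matrix.mul_smul,
        Matrix.one_mul, Matrix.mul_one, smul_sub, smul_smul]
      module
    rw [expand, Matrix.trace_add, Matrix.trace_sub, Matrix.trace_sub, trPP i j,
      Matrix.trace_smul, Matrix.trace_smul, Matrix.trace_smul, trP i, trP j, Matrix.trace_one,
      Fintype.card_fin]
    push_cast
    field_simp
    try ring
    have hNN : (N:ℂ) * (N:ℂ)⁻¹ = 1 := mul_inv_cancel₀ hN0
    linear_combination ((N:ℂ) * (N:ℂ)⁻¹ - 1) * hNN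
  have hgQQ : ∀ i j, ((P i - ((1:ℂ)/N) • 1) * (P j - ((1:ℂ)/N) • 1)).trace
      = ((g i j / 2 : ℝ) : ℂ) := by
    intro i j
    conv_lhs => rw [hc i]
    rw [Matrix.sum_mul, Matrix.trace_sum]
    have step : ∀ μ, ((c i μ : ℂ) • lam μ * (P j - ((1:ℂ)/N) • 1)).trace
        = (c i μ : ℂ) * (2 * (c j μ : ℂ)) := by
      intro μ
      rw [Matrix.smul_mul, Matrix.trace_smul, smul_eq_mul, Matrix.trace_mul_comm, htrQlam j μ]
    simp only [step]
    rw [hgdef]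
    push_cast
    simp only [hrBc]
    push_cast
    rw [Finset.sum_div]
    congr 1; funext μ
    ring
  have hg : ∀ i j, g i j = if i = j then 2*((N:ℝ)-1)/N else -2/((N:ℝ)*((N:ℝ)+1)) := by
    intro i j
    have h1 : ((g i j / 2 : ℝ) : ℂ) = (((‖S i j‖)^2 - 1/N : ℝ) : ℂ) := by
      rw [← hgQQ i j, htrQQ i j]
    have h2 : g i j / 2 = (‖S i j‖)^2 - 1/N := by exact_mod_cast h1
    rw [habs] at h2
    by_cases h : i = j
    · rw [if_pos h] at h2 ⊢
      field_simp at h2 ⊢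
      linarith
    · rw [if_neg h] at h2 ⊢
      have hN1 : (N:ℝ) + 1 ≠ 0 := by linarith
      field_simp at h2 ⊢
      linarith
  have hL : ∀ i, ∑ ν, rB i ν ^ 2 = 2*((N:ℝ)-1)/N := by
    intro i
    have := hg i i
    rw [if_pos rfl] at this
    rw [← this, hgdef]
    congr 1; funext ν; ring
  set L : ℝ := Real.sqrt (2*((N:ℝ)-1)/N) with hLdef
  have hLpos : 0 < L := by
    apply Real.sqrt_pos.mpr
    positivity
  have hL2 : L^2 = 2*((N:ℝ)-1)/N := Real.sq_sqrt (by positivity)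
  have hahat' : ∀ i μ, ahat i μ = rB i μ / L := by
    intro i μ
    rw [hahat i μ, hL i]
  -- first moment
  have hcardμ : (Fintype.card (Fin (N^2-1)) : ℝ) = (N:ℝ)^2 - 1 := by
    rw [Fintype.card_fin]
    have h1 : 1 ≤ N^2 := by nlinarith
    push_cast [Nat.cast_sub h1]
    ring
  have hcardi : (Fintype.card (Fin (N^2)) : ℝ) = (N:ℝ)^2 := by
    rw [Fintype.card_fin]; push_cast; ring
  have hsum1 : ∀ μ, ∑ i, rB i μ = 0 := by
    have key : ∑ μ, (∑ i, rB i μ)^2 = 0 := by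
      rw [aux_swap2]
      have e2 : ∑ i : Fin (N^2), ∑ j : Fin (N^2), (∑ μ, rB i μ * rB j μ)
          = ∑ i : Fin (N^2), ∑ j : Fin (N^2),
            (if i = j then 2*((N:ℝ)-1)/N else -2/((N:ℝ)*((N:ℝ)+1))) := by
        refine Finset.sum_congr rfl fun i _ => Finset.sum_congr rfl fun j _ => ?_
        rw [← hg i j]
      rw [e2, aux_sum_sum_ite, hcardi]
      have hN1 : (N:ℝ) + 1 ≠ 0 := by linarith
      field_simp
      try ring
    intro μ
    have hnn : ∀ μ' ∈ Finset.univ, (0:ℝ) ≤ (∑ i, rB i μ')^2 :=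
      fun μ' _ => sq_nonneg _
    have := (Finset.sum_eq_zero_iff_of_nonneg hnn).mp key μ (Finset.mem_univ μ)
    exact pow_eq_zero_iff (by norm_num) |>.mp this
  -- second moment
  have hsum2 : ∀ μ ν, ∑ i, rB i μ * rB i ν
      = if μ = ν then 2*(N:ℝ)/((N:ℝ)+1) else 0 := by
    set c0 : ℝ := 2*(N:ℝ)/((N:ℝ)+1) with hc0
    have key : ∑ μ, ∑ ν, (∑ i, rB i μ * rB i ν - if μ = ν then c0 else 0)^2 = 0 := by
      have expand : ∀ μ ν, (∑ i, rB i μ * rB i ν - if μ = ν then c0 else 0)^2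
          = (∑ i, rB i μ * rB i ν)^2
            - 2 * c0 * ((if μ = ν then 1 else 0) * (∑ i, rB i μ * rB i ν))
            + (if μ = ν then c0^2 else 0) := by
        intro μ ν
        by_cases h : μ = ν <;> simp [h] <;> ring
      simp only [expand]
      rw [Finset.sum_congr rfl (fun μ _ => Finset.sum_add_distrib), Finset.sum_add_distrib,
        Finset.sum_congr rfl (fun μ _ => Finset.sum_sub_distrib _ _), Finset.sum_sub_distrib]
      have T1 : ∑ μ, ∑ ν, (∑ i, rB i μ * rB i ν)^2
          = (N:ℝ)^2 * (2*((N:ℝ)-1)/N)^2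
            + (N:ℝ)^2*((N:ℝ)^2 - 1) * (-2/((N:ℝ)*((N:ℝ)+1)))^2 := by
        rw [aux_swap24]
        have e2 : ∑ i : Fin (N^2), ∑ j : Fin (N^2), (∑ μ, rB i μ * rB j μ)^2
            = ∑ i : Fin (N^2), ∑ j : Fin (N^2),
              (if i = j then (2*((N:ℝ)-1)/N)^2 else (-2/((N:ℝ)*((N:ℝ)+1)))^2) := by
          refine Finset.sum_congr rfl fun i _ => Finset.sum_congr rfl fun j _ => ?_
          have : (∑ μ, rB i μ * rB j μ) = g i j := rfl
          rw [this, hg i j]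
          by_cases h : i = j <;> simp [h]
        rw [e2, aux_sum_sum_ite, hcardi]
      have T2 : ∑ μ, ∑ ν, 2 * c0 * ((if μ = ν then 1 else 0) * (∑ i, rB i μ * rB i ν))
          = 2 * c0 * (2*(N:ℝ)*((N:ℝ)-1)) := by
        have e : ∀ μ : Fin (N^2-1),
            ∑ ν, 2 * c0 * ((if μ = ν then 1 else 0) * (∑ i, rB i μ * rB i ν))
            = 2 * c0 * (∑ i, rB i μ * rB i μ) := by
          intro μ
          simp only [ite_mul, one_mul, zero_mul, mul_ite, mul_zero]
          rw [Finset.sum_ite_eq]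
          simp
        simp only [e]
        rw [← Finset.mul_sum]
        congr 1
        rw [Finset.sum_comm]
        have e2 : ∀ i : Fin (N^2), (∑ μ, rB i μ * rB i μ) = 2*((N:ℝ)-1)/N := by
          intro i
          have h := hg i i
          rw [if_pos rfl] at h
          exact h
        simp only [e2]
        rw [Finset.sum_const, Finset.card_univ, nsmul_eq_mul, hcardi]
        field_simp
      have T3 : ∑ μ : Fin (N^2-1), ∑ ν : Fin (N^2-1), (if μ = ν then c0^2 else 0)
          = ((N:ℝ)^2 - 1) * c0^2 := by
        have e : ∀ μ : Fin (N^2-1), ∑ ν, (if μ = ν then c0^2 else 0) = c0^2 := by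
          intro μ
          rw [Finset.sum_ite_eq]
          simp
        simp only [e]
        rw [Finset.sum_const, Finset.card_univ, nsmul_eq_mul, hcardμ]
      rw [T1, T2, T3, hc0]
      have hN1 : (N:ℝ) + 1 ≠ 0 := by linarith
      field_simp
      try ring
    intro μ ν
    have hnn1 : ∀ μ' ∈ Finset.univ, (0:ℝ)
        ≤ ∑ ν', (∑ i, rB i μ' * rB i ν' - if μ' = ν' then c0 else 0)^2 :=
      fun μ' _ => Finset.sum_nonneg fun ν' _ => sq_nonneg _
    have h1 := (Finset.sum_eq_zero_iff_of_nonneg hnn1).mp key μ (Finset.mem_univ μ)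
    have hnn2 : ∀ ν' ∈ Finset.univ, (0:ℝ)
        ≤ (∑ i, rB i μ * rB i ν' - if μ = ν' then c0 else 0)^2 :=
      fun ν' _ => sq_nonneg _
    have h2 := (Finset.sum_eq_zero_iff_of_nonneg hnn2).mp h1 ν (Finset.mem_univ ν)
    have := pow_eq_zero_iff (n := 2) (by norm_num) |>.mp h2
    linarith [sub_eq_zero.mp this]
  -- normalized vectors
  have hasum1 : ∀ μ, ∑ i, ahat i μ = 0 := by
    intro μ
    simp only [hahat']
    rw [← Finset.sum_div, hsum1 μ]
    simp
  have hasum2 : ∀ μ ν, ∑ i, ahat i μ * ahat i ν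
      = if μ = ν then (N:ℝ)^2/((N:ℝ)^2-1) else 0 := by
    intro μ ν
    simp only [hahat', div_mul_div_comm]
    rw [← Finset.sum_div, hsum2 μ ν]
    have hLL : L * L = 2*((N:ℝ)-1)/N := by rw [← sq]; exact hL2
    have hN1 : (N:ℝ) + 1 ≠ 0 := by linarith
    have hNm1 : (N:ℝ) - 1 ≠ 0 := hNR1.ne'
    have hNne : (N:ℝ) ≠ 0 := hNR.ne'
    have hN2R : (N:ℝ)^2 - 1 ≠ 0 := by nlinarith
    by_cases h : μ = ν
    · rw [if_pos h, if_pos h, hLL]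
      field_simp
      ring
    · rw [if_neg h, if_neg h, zero_div]
  -- the key matrix identity for A i
  have hA : ∀ i, (∑ μ, ((ahat i μ : ℝ):ℂ) • lam μ)
      = (((2/L : ℝ)):ℂ) • (P i - ((1:ℂ)/N) • 1) := by
    intro i
    conv_rhs => rw [hc i]
    rw [Finset.smul_sum]
    refine Finset.sum_congr rfl fun μ _ => ?_
    rw [smul_smul]
    congr 1
    rw [hahat' i μ, hrBc i μ]
    push_cast
    field_simp
    try ring
  -- interval endpoints
  set a : ℝ := Real.sqrt (2 / ((N : ℝ) * ((N : ℝ) - 1))) with hadef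
  have hapos : 0 < a := Real.sqrt_pos.mpr (by positivity)
  have hbpos : 0 < L := hLpos
  have hab : a * ((N:ℝ) - 1) = L := by
    rw [hadef, hLdef]
    rw [show ((N:ℝ) - 1) = Real.sqrt (((N:ℝ)-1)^2) by rw [Real.sqrt_sq hNR1.le]]
    rw [← Real.sqrt_mul (by positivity)]
    congr 1
    field_simp
    ring_nf
    rw [Real.sq_sqrt (by nlinarith)]
  have hab2 : a * L = 2 / N := by
    rw [hadef, hLdef, ← Real.sqrt_mul (by positivity)]
    rw [show 2 / ((N:ℝ) * ((N:ℝ) - 1)) * (2 * ((N:ℝ) - 1) / N) = (2/(N:ℝ))^2 by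
      field_simp]
    exact Real.sqrt_sq (by positivity)
  -- PSD + trace for arbitrary w in the interval
  have hpsd : ∀ w : ℝ, -a ≤ w → w ≤ L → ∀ i,
      (((1 : ℂ) / N) • (1 : Matrix (Fin N) (Fin N) ℂ) +
        ((w : ℂ) / 2) • ∑ μ, ((ahat i μ : ℝ) : ℂ) • lam μ).PosSemidef := by
    intro w hw1 hw2 i
    have hrewrite : ((1 : ℂ) / N) • (1 : Matrix (Fin N) (Fin N) ℂ) +
        ((w : ℂ) / 2) • ∑ μ, ((ahat i μ : ℝ) : ℂ) • lam μ
        = (((1 - w/L) / N : ℝ) : ℂ) • (1 : Matrix (Fin N) (Fin N) ℂ) +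
          ((w/L : ℝ) : ℂ) • P i := by
      rw [hA i, smul_smul, smul_sub, smul_smul]
      have hscal : ((w:ℂ)/2) * (((2/L : ℝ)):ℂ) = ((w/L : ℝ):ℂ) := by
        push_cast
        have : (L:ℂ) ≠ 0 := by exact_mod_cast hLpos.ne'
        field_simp
        try ring
      rw [hscal]
      have hscal2 : (((1 - w/L) / N : ℝ) : ℂ) = (1:ℂ)/N - ((w/L:ℝ):ℂ) * ((1:ℂ)/N) := by
        push_cast
        field_simp
      rw [hscal2]
      module
    rw [hrewrite, hP i]
    apply aux_psd N hN (ψ i) (hψ_unit i)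
    · have ha0 : a ≠ 0 := hapos.ne'
      have heq : -(1 / ((N:ℝ) - 1)) = -a / L := by
        rw [← hab]
        field_simp
      rw [heq, div_le_div_iff_of_pos_right hbpos]
      exact hw1
    · exact (div_le_one hbpos).mpr hw2
  -- trace one
  have htr : ∀ (w : ℝ) i,
      (((1 : ℂ) / N) • (1 : Matrix (Fin N) (Fin N) ℂ) +
        ((w : ℂ) / 2) • ∑ μ, ((ahat i μ : ℝ) : ℂ) • lam μ).trace = 1 := by
    intro w i
    rw [Matrix.trace_add, Matrix.trace_smul, Matrix.trace_smul, Matrix.trace_one,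
      Matrix.trace_sum, Fintype.card_fin]
    have : ∀ μ, (((ahat i μ : ℝ) : ℂ) • lam μ).trace = 0 := by
      intro μ
      rw [Matrix.trace_smul, htraceless μ, smul_zero]
    rw [Finset.sum_congr rfl fun μ _ => this μ]
    simp only [Finset.sum_const_zero, smul_zero, add_zero, smul_eq_mul]
    field_simp
    norm_num
  -- sums of A i
  have hA0 : ∑ i, (∑ μ, ((ahat i μ : ℝ):ℂ) • lam μ) = 0 := by
    rw [Finset.sum_comm]
    refine Finset.sum_eq_zero fun μ _ => ?_
    rw [← Finset.sum_smul]
    have : (∑ i, ((ahat i μ : ℝ):ℂ)) = 0 := by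
      rw [← Complex.ofReal_sum, hasum1 μ]
      norm_num
    rw [this, zero_smul]
  have hA2 : ∑ i, (∑ μ, ((ahat i μ : ℝ):ℂ) • lam μ) ⊗ₖ (∑ μ, ((ahat i μ : ℝ):ℂ) • lam μ)ᵀ
      = (((N:ℝ)^2/((N:ℝ)^2-1) : ℝ):ℂ) • ∑ μ, lam μ ⊗ₖ (lam μ)ᵀ := by
    have e1 : ∀ i, (∑ μ, ((ahat i μ : ℝ):ℂ) • lam μ) ⊗ₖ (∑ μ, ((ahat i μ : ℝ):ℂ) • lam μ)ᵀ
        = ∑ μ, ∑ ν, (((ahat i μ * ahat i ν : ℝ)):ℂ) • (lam μ ⊗ₖ (lam ν)ᵀ) := by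
      intro i
      rw [Matrix.transpose_sum]
      simp only [Matrix.transpose_smul]
      rw [aux_sum_kron_left]
      refine Finset.sum_congr rfl fun μ _ => ?_
      rw [Matrix.smul_kronecker, aux_kron_sum_right, Finset.smul_sum]
      refine Finset.sum_congr rfl fun ν _ => ?_
      rw [Matrix.kronecker_smul, smul_smul]
      congr 1
      push_cast
      ring
    simp only [e1]
    rw [Finset.sum_comm]
    have e2 : ∀ μ, ∑ i, ∑ ν, (((ahat i μ * ahat i ν : ℝ)):ℂ) • (lam μ ⊗ₖ (lam ν)ᵀ)
        = ∑ ν, (((∑ i, ahat i μ * ahat i ν : ℝ)):ℂ) • (lam μ ⊗ₖ (lam ν)ᵀ) := by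
      intro μ
      rw [Finset.sum_comm]
      refine Finset.sum_congr rfl fun ν _ => ?_
      rw [← Finset.sum_smul, ← Complex.ofReal_sum]
    simp only [e2]
    rw [Finset.smul_sum]
    refine Finset.sum_congr rfl fun μ _ => ?_
    have e3 : ∀ ν, (((∑ i, ahat i μ * ahat i ν : ℝ)):ℂ) • (lam μ ⊗ₖ (lam ν)ᵀ)
        = if μ = ν then (((N:ℝ)^2/((N:ℝ)^2-1) : ℝ):ℂ) • (lam μ ⊗ₖ (lam ν)ᵀ) else 0 := by
      intro ν
      rw [hasum2 μ ν]
      by_cases h : μ = ν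
      · rw [if_pos h, if_pos h]
      · rw [if_neg h, if_neg h]
        norm_num
    rw [Finset.sum_congr rfl fun ν _ => e3 ν]
    rw [Finset.sum_ite_eq Finset.univ μ
      (fun ν => (((N:ℝ)^2/((N:ℝ)^2-1) : ℝ):ℂ) • (lam μ ⊗ₖ (lam ν)ᵀ))]
    simp
  -- main decomposition identity, for any w v with w * v = τ
  have hmain : ∀ w v : ℝ, w * v = τ →
      ((1 : ℂ) / N ^ 2) •
          ((1 : Matrix (Fin N) (Fin N) ℂ) ⊗ₖ (1 : Matrix (Fin N) (Fin N) ℂ)) +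
        ((τ : ℂ) / (4 * ((N : ℂ) ^ 2 - 1))) • ∑ μ, lam μ ⊗ₖ (lam μ)ᵀ
        = ∑ i, ((1 : ℂ) / N ^ 2) •
            ((((1 : ℂ) / N) • (1 : Matrix (Fin N) (Fin N) ℂ) +
                ((w : ℂ) / 2) • ∑ μ, ((ahat i μ : ℝ) : ℂ) • lam μ) ⊗ₖ
              (((1 : ℂ) / N) • (1 : Matrix (Fin N) (Fin N) ℂ) +
                ((v : ℂ) / 2) • ∑ μ, ((ahat i μ : ℝ) : ℂ) • lam μ)ᵀ) := by
    intro w v hwv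
    have expand : ∀ i,
        ((1 : ℂ) / N ^ 2) • ((((1 : ℂ) / N) • (1 : Matrix (Fin N) (Fin N) ℂ) +
            ((w : ℂ) / 2) • ∑ μ, ((ahat i μ : ℝ) : ℂ) • lam μ) ⊗ₖ
          (((1 : ℂ) / N) • (1 : Matrix (Fin N) (Fin N) ℂ) +
            ((v : ℂ) / 2) • ∑ μ, ((ahat i μ : ℝ) : ℂ) • lam μ)ᵀ)
        = (((1:ℂ)/N^2) * (((1:ℂ)/N) * ((1:ℂ)/N))) • ((1 : Matrix (Fin N) (Fin N) ℂ) ⊗ₖ 1)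
          + ((((1:ℂ)/N^2) * (((1:ℂ)/N) * ((v:ℂ)/2))) •
              ((1 : Matrix (Fin N) (Fin N) ℂ) ⊗ₖ ((∑ μ, ((ahat i μ : ℝ) : ℂ) • lam μ)ᵀ))
          + ((((1:ℂ)/N^2) * (((w:ℂ)/2) * ((1:ℂ)/N))) •
              ((∑ μ, ((ahat i μ : ℝ) : ℂ) • lam μ) ⊗ₖ (1 : Matrix (Fin N) (Fin N) ℂ))
          + (((1:ℂ)/N^2) * (((w:ℂ)/2) * ((v:ℂ)/2))) •
              ((∑ μ, ((ahat i μ : ℝ) : ℂ) • lam μ) ⊗ₖ ((∑ μ, ((ahat i μ : ℝ) : ℂ) • lam μ)ᵀ)))) := by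
      intro i
      rw [Matrix.transpose_add, Matrix.transpose_smul, Matrix.transpose_smul,
        Matrix.transpose_one]
      rw [Matrix.add_kronecker, Matrix.kronecker_add, Matrix.kronecker_add]
      simp only [Matrix.smul_kronecker, Matrix.kronecker_smul, smul_smul, smul_add]
      module
    symm
    rw [Finset.sum_congr rfl fun i _ => expand i]
    rw [Finset.sum_add_distrib, Finset.sum_add_distrib, Finset.sum_add_distrib]
    have eh2 : ∑ i : Fin (N^2), ((((1:ℂ)/N^2) * (((1:ℂ)/N) * ((v:ℂ)/2))) •
        ((1 : Matrix (Fin N) (Fin N) ℂ) ⊗ₖ ((∑ μ, ((ahat i μ : ℝ) : ℂ) • lam μ)ᵀ))) = 0 := by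
      rw [← Finset.smul_sum, ← aux_kron_sum_right, ← Matrix.transpose_sum, hA0,
        Matrix.transpose_zero, Matrix.kronecker_zero, smul_zero]
    have eh3 : ∑ i : Fin (N^2), ((((1:ℂ)/N^2) * (((w:ℂ)/2) * ((1:ℂ)/N))) •
        ((∑ μ, ((ahat i μ : ℝ) : ℂ) • lam μ) ⊗ₖ (1 : Matrix (Fin N) (Fin N) ℂ))) = 0 := by
      rw [← Finset.smul_sum, ← aux_sum_kron_left, hA0, Matrix.zero_kronecker, smul_zero]
    have eh1 : ∑ _i : Fin (N^2), ((((1:ℂ)/N^2) * (((1:ℂ)/N) * ((1:ℂ)/N))) •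
        ((1 : Matrix (Fin N) (Fin N) ℂ) ⊗ₖ (1 : Matrix (Fin N) (Fin N) ℂ)))
        = ((1:ℂ)/N^2) • ((1 : Matrix (Fin N) (Fin N) ℂ) ⊗ₖ 1) := by
      rw [Finset.sum_const, Finset.card_univ, Fintype.card_fin, ← Nat.cast_smul_eq_nsmul (R := ℂ), smul_smul]
      congr 1
      push_cast
      field_simp
      try ring
    have eh4 : ∑ i : Fin (N^2), ((((1:ℂ)/N^2) * (((w:ℂ)/2) * ((v:ℂ)/2))) •
        ((∑ μ, ((ahat i μ : ℝ) : ℂ) • lam μ) ⊗ₖ ((∑ μ, ((ahat i μ : ℝ) : ℂ) • lam μ)ᵀ)))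
        = ((τ : ℂ) / (4 * ((N : ℂ) ^ 2 - 1))) • ∑ μ, lam μ ⊗ₖ (lam μ)ᵀ := by
      rw [← Finset.smul_sum, hA2, smul_smul]
      congr 1
      have hwvC : ((w:ℂ)) * ((v:ℂ)) = ((τ:ℝ):ℂ) := by
        rw [← hwv]; push_cast; ring
      push_cast
      field_simp
      linear_combination 4 * hwvC
    rw [eh1, eh2, eh3, eh4]
    rw [zero_add, zero_add]
  -- choose r and s
  by_cases hτ : 0 ≤ τ
  · refine ⟨Real.sqrt τ, Real.sqrt τ, ⟨?_, ?_⟩, ⟨?_, ?_⟩, ?_, ?_, ?_, ?_⟩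
    · linarith [Real.sqrt_nonneg τ, hapos.le]
    · rw [hLdef]
      exact Real.sqrt_le_sqrt hτ₂
    · linarith [Real.sqrt_nonneg τ, hapos.le]
    · rw [hLdef]
      exact Real.sqrt_le_sqrt hτ₂
    · exact Real.mul_self_sqrt hτ
    · intro i
      exact ⟨hpsd _ (by linarith [Real.sqrt_nonneg τ, hapos.le])
        (by rw [hLdef]; exact Real.sqrt_le_sqrt hτ₂) i, htr _ i⟩
    · intro i
      exact ⟨hpsd _ (by linarith [Real.sqrt_nonneg τ, hapos.le])
        (by rw [hLdef]; exact Real.sqrt_le_sqrt hτ₂) i, htr _ i⟩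
    · exact hmain _ _ (Real.mul_self_sqrt hτ)
  · push_neg at hτ
    have ha0 : a ≠ 0 := hapos.ne'
    have hs1 : -a ≤ -τ/a := by
      have : 0 < -τ/a := div_pos (by linarith) hapos
      linarith
    have hs2 : -τ/a ≤ L := by
      rw [div_le_iff₀ hapos]
      have h2N : -τ ≤ 2/(N:ℝ) := by
        have h' : -(2/(N:ℝ)) ≤ τ := by rw [← neg_div]; exact hτ₁
        linarith
      calc -τ ≤ 2/(N:ℝ) := h2N
        _ = a * L := hab2.symm
        _ = L * a := mul_comm _ _
    refine ⟨-a, -τ/a, ⟨le_refl _, by linarith [hapos.le, hbpos.le]⟩, ⟨hs1, hs2⟩, ?_, ?_, ?_, ?_⟩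
    · field_simp
    · intro i
      exact ⟨hpsd _ (le_refl _) (by linarith [hapos.le, hbpos.le]) i, htr _ i⟩
    · intro i
      exact ⟨hpsd _ hs1 hs2 i, htr _ i⟩
    · apply hmain
      field_simp
end
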